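/- arXiv:0807.2187 — 7 statements merged into one kernel-verified Lean document; each statement's English description precedes it below -/
import Mathlib

section
/- Let κ < 0 and let u : (−∞,0) → ℝ be twice differentiable. Define w(s) := u(−sinh²(√(−κ)·s/2)) for s ∈ (0,∞). Then for every s > 0, setting t := −sinh²(√(−κ)·s/2), one has −w''(s) − √(−κ)·coth(√(−κ)·s)·w'(s) + (2κ/(1+cosh(√(−κ)·s)))·w(s) = κ·[ −t(1−t)·u''(t) − (1−2t)·u'(t) + u(t)/(1−t) ]. -/
/-- for κ < 0 and a twice differentiable u : (−∞,0) → ℝ, the function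
w(s) := u(−sinh²(√(−κ) s/2)) satisfies, for s > 0 and t := −sinh²(√(−κ) s/2),
−w''(s) − √(−κ) coth(√(−κ) s) w'(s) + (2κ/(1+cosh(√(−κ) s))) w(s)
  = κ[−t(1−t)u''(t) − (1−2t)u'(t) + u(t)/(1−t)]. -/
theorem stmt_5 (κ : ℝ) (hκ : κ < 0) (u : ℝ → ℝ)
    (hu : ∀ t : ℝ, t < 0 → DifferentiableAt ℝ u t)
    (hu' : ∀ t : ℝ, t < 0 → DifferentiableAt ℝ (deriv u) t)
    (w : ℝ → ℝ) (hw : ∀ s : ℝ, w s = u (-(Real.sinh (Real.sqrt (-κ) * s / 2) ^ 2))) :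
    ∀ s : ℝ, 0 < s →
      -(deriv (deriv w) s)
          - Real.sqrt (-κ) * (Real.cosh (Real.sqrt (-κ) * s) / Real.sinh (Real.sqrt (-κ) * s)) *
            deriv w s
          + (2 * κ / (1 + Real.cosh (Real.sqrt (-κ) * s))) * w s
        = κ * (-((-(Real.sinh (Real.sqrt (-κ) * s / 2) ^ 2)) *
              (1 - (-(Real.sinh (Real.sqrt (-κ) * s / 2) ^ 2))) *
              deriv (deriv u) (-(Real.sinh (Real.sqrt (-κ) * s / 2) ^ 2)))
            - (1 - 2 * (-(Real.sinh (Real.sqrt (-κ) * s / 2) ^ 2))) *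
              deriv u (-(Real.sinh (Real.sqrt (-κ) * s / 2) ^ 2))
            + u (-(Real.sinh (Real.sqrt (-κ) * s / 2) ^ 2)) /
              (1 - (-(Real.sinh (Real.sqrt (-κ) * s / 2) ^ 2)))) := by
  intro s hs
  set a : ℝ := Real.sqrt (-κ) with ha_def
  have ha : 0 < a := Real.sqrt_pos.2 (by linarith)
  have ha2 : a ^ 2 = -κ := Real.sq_sqrt (by linarith)
  have hwfun : w = fun x => u (-(Real.sinh (a * x / 2) ^ 2)) := funext hw
  -- derivative of inner function
  have hφ : ∀ x : ℝ, HasDerivAt (fun x => -(Real.sinh (a * x / 2) ^ 2))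
      (-(a / 2 * Real.sinh (a * x))) x := by
    intro x
    have h1 : HasDerivAt (fun x : ℝ => a * x / 2) (a / 2) x := by
      simpa using ((hasDerivAt_id x).const_mul a).div_const 2
    have h2 : HasDerivAt (fun x : ℝ => Real.sinh (a * x / 2))
        (Real.cosh (a * x / 2) * (a / 2)) x := by
      have := (Real.hasDerivAt_sinh (a * x / 2)).comp x h1; exact this
    have h3 := (h2.pow 2).neg
    refine h3.congr_deriv ?_
    rw [show a * x = 2 * (a * x / 2) by ring, Real.sinh_two_mul]
    ring
  have ht : ∀ x : ℝ, 0 < x → -(Real.sinh (a * x / 2) ^ 2) < 0 := by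
    intro x hx
    have : 0 < Real.sinh (a * x / 2) := Real.sinh_pos_iff.2 (by positivity)
    nlinarith
  have hw1 : ∀ x : ℝ, 0 < x → HasDerivAt w
      (deriv u (-(Real.sinh (a * x / 2) ^ 2)) * (-(a / 2 * Real.sinh (a * x)))) x := by
    intro x hx
    rw [hwfun]
    exact ((hu _ (ht x hx)).hasDerivAt).comp x (hφ x)
  have hderivw : ∀ x : ℝ, 0 < x → deriv w x =
      deriv u (-(Real.sinh (a * x / 2) ^ 2)) * (-(a / 2 * Real.sinh (a * x))) :=
    fun x hx => (hw1 x hx).deriv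
  -- second derivative
  have hA : HasDerivAt (fun x => deriv u (-(Real.sinh (a * x / 2) ^ 2)))
      (deriv (deriv u) (-(Real.sinh (a * s / 2) ^ 2)) * (-(a / 2 * Real.sinh (a * s)))) s :=
    by have := ((hu' _ (ht s hs)).hasDerivAt).comp s (hφ s); exact this
  have hB : HasDerivAt (fun x => -(a / 2 * Real.sinh (a * x)))
      (-(a / 2 * (Real.cosh (a * s) * a))) s := by
    have h1 : HasDerivAt (fun x : ℝ => a * x) a s := by
      simpa using (hasDerivAt_id s).const_mul a
    have h2 : HasDerivAt (fun x : ℝ => Real.sinh (a * x)) (Real.cosh (a * s) * a) s :=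
      (Real.hasDerivAt_sinh (a * s)).comp s h1
    exact (h2.const_mul (a / 2)).neg
  have hG := hA.mul hB
  have hev : deriv w =ᶠ[nhds s] fun x =>
      deriv u (-(Real.sinh (a * x / 2) ^ 2)) * (-(a / 2 * Real.sinh (a * x))) := by
    filter_upwards [Ioi_mem_nhds hs] with x hx
    exact hderivw x hx
  have hW2 : deriv (deriv w) s =
      deriv (deriv u) (-(Real.sinh (a * s / 2) ^ 2)) * (-(a / 2 * Real.sinh (a * s))) *
          (-(a / 2 * Real.sinh (a * s))) +
        deriv u (-(Real.sinh (a * s / 2) ^ 2)) * (-(a / 2 * (Real.cosh (a * s) * a))) := by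
    rw [hev.deriv_eq]
    exact hG.deriv
  -- abbreviations
  set S : ℝ := Real.sinh (a * s / 2) with hS_def
  set C : ℝ := Real.cosh (a * s / 2) with hC_def
  have hS : 0 < S := Real.sinh_pos_iff.2 (by positivity)
  have hC2 : C ^ 2 = 1 + S ^ 2 := Real.cosh_sq' _
  have hsh : Real.sinh (a * s) = 2 * S * C := by
    rw [show a * s = 2 * (a * s / 2) by ring, Real.sinh_two_mul]
  have hch : Real.cosh (a * s) = 1 + 2 * S ^ 2 := by
    rw [show a * s = 2 * (a * s / 2) by ring, Real.cosh_two_mul, ← hC_def, ← hS_def, hC2]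
    ring
  have hCpos : 0 < C := Real.cosh_pos _
  have hκa : κ = -a ^ 2 := by linarith
  have hU2 : deriv (deriv w) s =
      a ^ 2 * S ^ 2 * (1 + S ^ 2) * deriv (deriv u) (-(S ^ 2)) -
        a ^ 2 / 2 * (1 + 2 * S ^ 2) * deriv u (-(S ^ 2)) := by
    rw [hW2, hsh, hch]
    linear_combination (a ^ 2 * S ^ 2 * deriv (deriv u) (-(S ^ 2))) * hC2
  have hcoth : a * (Real.cosh (a * s) / Real.sinh (a * s)) * deriv w s =
      -(a ^ 2 / 2) * (1 + 2 * S ^ 2) * deriv u (-(S ^ 2)) := by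
    rw [hderivw s hs, hsh, hch]
    have hSne : S ≠ 0 := ne_of_gt hS
    have hCne : C ≠ 0 := ne_of_gt hCpos
    field_simp
    ring
  rw [hU2, hcoth, hw s, ← hS_def, hch]
  have h1 : (1 : ℝ) + S ^ 2 ≠ 0 := by positivity
  have h2 : (1 : ℝ) + (1 + 2 * S ^ 2) ≠ 0 := by positivity
  have h3 : (1 : ℝ) - -S ^ 2 ≠ 0 := by rw [sub_neg_eq_add]; exact h1
  rw [hκa]
  field_simp
  ring
end

section
/- Let κ > 0 and let j ≥ 0 be an integer. Then the function w(s) := cos²(√κ·s/2)·P_j^{(0,2)}(cos(√κ·s)) satisfies −w''(s) − √κ·cot(√κ·s)·w'(s) + (2κ/(1+cos(√κ·s)))·w(s) = κ·(j+1)(j+2)·w(s) for every s ∈ (0, π/√κ). -/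
/-- The Jacobi polynomial `P_j^{(0,2)}` defined by Rodrigues' formula. -/
noncomputable def jacobiP02 (j : ℕ) (x : ℝ) : ℝ :=
  ((-1) ^ j / (2 ^ j * (Nat.factorial j : ℝ) * (1 + x) ^ 2)) *
    iteratedDeriv j (fun y : ℝ => (1 - y) ^ j * (1 + y) ^ (j + 2)) x

namespace Stmt7Aux

open Polynomial

noncomputable def pj (j : ℕ) : Polynomial ℝ := (1 - X) ^ j * (1 + X) ^ (j + 2)

noncomputable def q (j k : ℕ) : Polynomial ℝ := derivative^[k] (pj j)

lemma q_succ (j k : ℕ) : q j (k + 1) = derivative (q j k) := by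
  simp [q, Function.iterate_succ_apply']

lemma base (j : ℕ) :
    (1 - X ^ 2) * q j 1 = (2 - (2 * (j : Polynomial ℝ) + 2) * X) * q j 0 := by
  have h1 : q j 1 = derivative (pj j) := by simp [q]
  have h0 : q j 0 = pj j := rfl
  rw [h1, h0]
  unfold pj
  cases j with
  | zero =>
    simp [derivative_pow, derivative_add, map_ofNat]
    ring
  | succ n =>
    simp only [derivative_mul, derivative_pow, derivative_add, derivative_sub,
      derivative_one, derivative_X, Nat.add_sub_cancel, Nat.succ_sub_one,
      map_add, map_one, map_ofNat, Polynomial.C_eq_natCast]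
    push_cast
    ring

lemma step (j : ℕ) : ∀ k : ℕ,
    (1 - X ^ 2) * q j (k + 2)
      = (2 - (2 * (j : Polynomial ℝ) - 2 * (k : Polynomial ℝ)) * X) * q j (k + 1)
        + ((k : Polynomial ℝ) + 1) * ((k : Polynomial ℝ) - 2 * (j : Polynomial ℝ) - 2) * q j k := by
  intro k
  induction k with
  | zero =>
    have h := congrArg derivative (base j)
    rw [derivative_mul, derivative_mul, ← q_succ, ← q_succ] at h
    have d1 : derivative ((1 : ℝ[X]) - X ^ 2) = -(2 * X) := by
      simp [derivative_X_pow, map_ofNat]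
      norm_num
    have d2 : derivative ((2 : ℝ[X]) - (2 * (j : Polynomial ℝ) + 2) * X)
        = -(2 * (j : Polynomial ℝ) + 2) := by
      simp [derivative_mul]
    rw [d1, d2] at h
    push_cast
    norm_num
    linear_combination h
  | succ k ih =>
    have h := congrArg derivative ih
    rw [derivative_mul, derivative_add, derivative_mul, derivative_mul,
      ← q_succ, ← q_succ, ← q_succ] at h
    have d1 : derivative ((1 : ℝ[X]) - X ^ 2) = -(2 * X) := by
      simp [derivative_X_pow, map_ofNat]
      norm_num
    have d2 : derivative ((2 : ℝ[X]) - (2 * (j : Polynomial ℝ) - 2 * (k : Polynomial ℝ)) * X)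
        = -(2 * (j : Polynomial ℝ) - 2 * (k : Polynomial ℝ)) := by
      simp [derivative_mul]
    have d3 : derivative (((k : Polynomial ℝ) + 1) * ((k : Polynomial ℝ) - 2 * (j : Polynomial ℝ) - 2)) = 0 := by
      simp [derivative_mul]
    rw [d1, d2, d3] at h
    rw [show k + 1 + 2 = k + 2 + 1 from rfl]
    push_cast at h ⊢
    linear_combination h

lemma key (j : ℕ) :
    (1 - X ^ 2) * q j (j + 2)
      = 2 * q j (j + 1) - ((j : Polynomial ℝ) + 1) * ((j : Polynomial ℝ) + 2) * q j j := by
  have h := step j j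
  linear_combination h

lemma iteratedDeriv_polyeval (n : ℕ) (P : Polynomial ℝ) :
    iteratedDeriv n (fun y => P.eval y) = fun y => (derivative^[n] P).eval y := by
  induction n with
  | zero => simp
  | succ n ih =>
    rw [iteratedDeriv_succ, ih, Function.iterate_succ_apply']
    funext y
    exact Polynomial.deriv _

lemma iter_eq (j : ℕ) (x : ℝ) :
    iteratedDeriv j (fun y : ℝ => (1 - y) ^ j * (1 + y) ^ (j + 2)) x = (q j j).eval x := by
  have h : (fun y : ℝ => (1 - y) ^ j * (1 + y) ^ (j + 2)) = fun y => (pj j).eval y := by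
    funext y; simp [pj]
  rw [h, iteratedDeriv_polyeval]
  rfl

noncomputable def Wf (A r : ℝ) (g : Polynomial ℝ) (s : ℝ) : ℝ :=
  A * g.eval (Real.cos (r * s)) / (1 + Real.cos (r * s))

noncomputable def W1 (A r : ℝ) (g : Polynomial ℝ) (s : ℝ) : ℝ :=
  A * (-r * Real.sin (r * s)) *
    ((derivative g * (1 + X) - g).eval (Real.cos (r * s)))
    / (1 + Real.cos (r * s)) ^ 2

noncomputable def W2 (A r : ℝ) (g : Polynomial ℝ) (s : ℝ) : ℝ :=
  A * ((-(r * r * Real.cos (r * s))) *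
        ((derivative g * (1 + X) - g).eval (Real.cos (r * s)))
        / (1 + Real.cos (r * s)) ^ 2
      + r * r * Real.sin (r * s) ^ 2 *
        ((derivative (derivative g)).eval (Real.cos (r * s)) *
            (1 + Real.cos (r * s)) ^ 2
          - 2 * ((derivative g * (1 + X) - g).eval (Real.cos (r * s))))
        / (1 + Real.cos (r * s)) ^ 3)

lemma hasDerivAt_W (A r : ℝ) (g : Polynomial ℝ) (s : ℝ)
    (hne : 1 + Real.cos (r * s) ≠ 0) :
    HasDerivAt (Wf A r g) (W1 A r g s) s := by
  have hθ : HasDerivAt (fun t : ℝ => r * t) r s := by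
    simpa using (hasDerivAt_id s).const_mul r
  have hx : HasDerivAt (fun t => Real.cos (r * t)) (-Real.sin (r * s) * r) s := hθ.cos
  have hg0 : HasDerivAt (fun t => g.eval (Real.cos (r * t)))
      ((derivative g).eval (Real.cos (r * s)) * (-Real.sin (r * s) * r)) s :=
    (g.hasDerivAt _).comp s hx
  have hden : HasDerivAt (fun t => 1 + Real.cos (r * t)) (-Real.sin (r * s) * r) s :=
    hx.const_add 1
  have h := (hg0.const_mul A).div hden hne
  refine h.congr_deriv ?_
  unfold W1
  simp only [eval_sub, eval_mul, eval_add, eval_one, eval_X, Pi.mul_apply]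
  field_simp
  ring

lemma hasDerivAt_W1 (A r : ℝ) (g : Polynomial ℝ) (s : ℝ)
    (hne : 1 + Real.cos (r * s) ≠ 0) :
    HasDerivAt (W1 A r g) (W2 A r g s) s := by
  have hθ : HasDerivAt (fun t : ℝ => r * t) r s := by
    simpa using (hasDerivAt_id s).const_mul r
  have hx : HasDerivAt (fun t => Real.cos (r * t)) (-Real.sin (r * s) * r) s := hθ.cos
  have hu : HasDerivAt (fun t => A * (-r * Real.sin (r * t)))
      (A * (-r * (Real.cos (r * s) * r))) s :=
    (hθ.sin.const_mul (-r)).const_mul A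
  have hv : HasDerivAt (fun t => (derivative g * (1 + X) - g).eval (Real.cos (r * t)))
      ((derivative (derivative g * (1 + X) - g)).eval (Real.cos (r * s))
        * (-Real.sin (r * s) * r)) s :=
    ((derivative g * (1 + X) - g).hasDerivAt _).comp s hx
  have hden : HasDerivAt (fun t => 1 + Real.cos (r * t)) (-Real.sin (r * s) * r) s :=
    hx.const_add 1
  have hden2 : HasDerivAt (fun t => (1 + Real.cos (r * t)) ^ 2)
      (2 * (1 + Real.cos (r * s)) ^ 1 * (-Real.sin (r * s) * r)) s := hden.pow 2
  have h := (hu.mul hv).div hden2 (pow_ne_zero 2 hne)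
  have hder : derivative (derivative g * (1 + X) - g)
      = derivative (derivative g) * (1 + X) := by
    simp only [derivative_sub, derivative_mul, derivative_add, derivative_one, derivative_X]
    ring
  rw [hder] at h
  refine h.congr_deriv ?_
  unfold W2
  simp only [eval_sub, eval_mul, eval_add, eval_one, eval_X, Pi.mul_apply]
  field_simp
  ring

end Stmt7Aux

open Stmt7Aux Polynomial in
theorem stmt_7 (κ : ℝ) (hκ : 0 < κ) (j : ℕ) (w : ℝ → ℝ)
    (hw : ∀ s : ℝ, w s =
      Real.cos (Real.sqrt κ * s / 2) ^ 2 * jacobiP02 j (Real.cos (Real.sqrt κ * s))) :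
    ∀ s ∈ Set.Ioo (0 : ℝ) (Real.pi / Real.sqrt κ),
      -(deriv (deriv w) s)
          - Real.sqrt κ * (Real.cos (Real.sqrt κ * s) / Real.sin (Real.sqrt κ * s)) * deriv w s
          + (2 * κ / (1 + Real.cos (Real.sqrt κ * s))) * w s
        = κ * ((j : ℝ) + 1) * ((j : ℝ) + 2) * w s := by
  intro s hs
  set r : ℝ := Real.sqrt κ with hr
  have hr0 : (0 : ℝ) < r := Real.sqrt_pos.mpr hκ
  have hκr : κ = r * r := (Real.mul_self_sqrt hκ.le).symm
  set g : Polynomial ℝ := q j j with hg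
  set A : ℝ := (-1 : ℝ) ^ j / (2 ^ (j + 1) * (Nat.factorial j : ℝ)) with hA
  -- the function w equals the explicit Wf
  have hwW : w = Wf A r g := by
    funext t
    rw [hw t]
    unfold jacobiP02 Wf
    rw [iter_eq j]
    have hhalf : Real.cos (r * t / 2) ^ 2 = (1 + Real.cos (r * t)) / 2 := by
      rw [Real.cos_sq, show 2 * (r * t / 2) = r * t by ring]
      ring
    rw [hhalf]
    rcases eq_or_ne (1 + Real.cos (r * t)) 0 with h | h
    · rw [h]
      simp
    · have hfac : (Nat.factorial j : ℝ) ≠ 0 := Nat.cast_ne_zero.mpr (Nat.factorial_ne_zero j)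
      rw [hA]
      field_simp
      ring
  -- basic facts about θ = r s
  have hθ0 : 0 < r * s := mul_pos hr0 hs.1
  have hθπ : r * s < Real.pi := by
    calc r * s < r * (Real.pi / r) := mul_lt_mul_of_pos_left hs.2 hr0
    _ = Real.pi := by field_simp
  have hsin : 0 < Real.sin (r * s) := Real.sin_pos_of_pos_of_lt_pi hθ0 hθπ
  have hc2 : Real.cos (r * s) ^ 2 < 1 := by
    nlinarith [Real.sin_sq_add_cos_sq (r * s)]
  have hpos : 0 < 1 + Real.cos (r * s) := by nlinarith
  have hneg : 0 < 1 - Real.cos (r * s) := by nlinarith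
  have hne : 1 + Real.cos (r * s) ≠ 0 := ne_of_gt hpos
  -- open set on which the derivative formula holds
  have hUopen : IsOpen {t : ℝ | 1 + Real.cos (r * t) ≠ 0} := by
    have hc : Continuous fun t : ℝ => 1 + Real.cos (r * t) :=
      continuous_const.add (Real.continuous_cos.comp (continuous_const.mul continuous_id))
    exact isOpen_ne.preimage hc
  have hsU : s ∈ {t : ℝ | 1 + Real.cos (r * t) ≠ 0} := hne
  have hderiv1 : deriv w s = W1 A r g s := by
    rw [hwW]
    exact (hasDerivAt_W A r g s hne).deriv
  have hev : deriv w =ᶠ[nhds s] W1 A r g := by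
    filter_upwards [hUopen.mem_nhds hsU] with t ht
    rw [hwW]
    exact (hasDerivAt_W A r g t ht).deriv
  have hderiv2 : deriv (deriv w) s = W2 A r g s := by
    rw [hev.deriv_eq]
    exact (hasDerivAt_W1 A r g s hne).deriv
  -- evaluated key identity
  have F1 : (1 - Real.cos (r * s) ^ 2) * (derivative (derivative g)).eval (Real.cos (r * s))
      = 2 * (derivative g).eval (Real.cos (r * s))
        - ((j : ℝ) + 1) * ((j : ℝ) + 2) * g.eval (Real.cos (r * s)) := by
    have h := congrArg (Polynomial.eval (Real.cos (r * s))) (key j)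
    have e1 : q j (j + 1) = derivative g := by rw [hg]; exact q_succ j j
    have e2 : q j (j + 2) = derivative (derivative g) := by
      rw [show j + 2 = j + 1 + 1 from rfl, q_succ, e1]
    rw [e1, e2] at h
    simpa using h
  have he2 : (derivative (derivative g)).eval (Real.cos (r * s))
      = (2 * (derivative g).eval (Real.cos (r * s))
          - ((j : ℝ) + 1) * ((j : ℝ) + 2) * g.eval (Real.cos (r * s)))
        / ((1 + Real.cos (r * s)) * (1 - Real.cos (r * s))) := by
    rw [eq_div_iff (by positivity)]
    linear_combination F1
  have F2 : Real.sin (r * s) ^ 2 = 1 - Real.cos (r * s) ^ 2 :=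
    Real.sin_sq _
  -- final computation
  rw [hderiv1, hderiv2, hwW, hκr]
  unfold W1 W2 Wf
  simp only [eval_sub, eval_mul, eval_add, eval_one, eval_X]
  rw [he2, F2]
  field_simp
  ring
end

section
/- Let α ∈ ℂ be such that 2α is not a nonpositive integer. For every real t < 0, the function u(t) := (1−t)^{−α}·F(α, α; 2α; 1/(1−t)) satisfies t(1−t)·u''(t) + (1−2t)·u'(t) + α(α−1)·u(t) = 0. (Note that 1/(1−t) ∈ (0,1) for t < 0, so the defining series converges.) -/
/-- The Gauss hypergeometric function F(a,b;c;x), defined for real x with |x| < 1 by its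
power series, with Pochhammer symbols (a)_k = a(a+1)⋯(a+k−1). -/
noncomputable def hypF (a b c : ℂ) (x : ℝ) : ℂ :=
  ∑' k : ℕ, ((ascPochhammer ℂ k).eval a * (ascPochhammer ℂ k).eval b /
    ((ascPochhammer ℂ k).eval c * (Nat.factorial k : ℂ))) * (x : ℂ) ^ k

open Complex

noncomputable def cc (α : ℂ) (k : ℕ) : ℂ :=
  (ascPochhammer ℂ k).eval α * (ascPochhammer ℂ k).eval α /
    ((ascPochhammer ℂ k).eval (2 * α) * (Nat.factorial k : ℂ))

lemma poch_ne (α : ℂ) (hα : ∀ m : ℕ, 2 * α ≠ -(m : ℂ)) :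
    ∀ k, (ascPochhammer ℂ k).eval (2 * α) ≠ 0 := by
  intro k
  induction k with
  | zero => simp
  | succ n ih =>
    rw [ascPochhammer_succ_right]
    simp only [Polynomial.eval_mul, Polynomial.eval_add, Polynomial.eval_X,
      Polynomial.eval_natCast]
    refine mul_ne_zero ih fun h => hα n ?_
    linear_combination h

lemma cc_rec (α : ℂ) (hα : ∀ m : ℕ, 2 * α ≠ -(m : ℂ)) (k : ℕ) :
    cc α (k+1) * ((2*α + k) * ((k:ℂ) + 1)) = cc α k * (α + k)^2 := by
  have hQ := poch_ne α hα k
  have hfac : ((Nat.factorial k : ℂ)) ≠ 0 := Nat.cast_ne_zero.2 (Nat.factorial_ne_zero k)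
  have h2 : (2*α + (k:ℂ)) ≠ 0 := fun h => hα k (by linear_combination h)
  have hk1 : ((k:ℂ) + 1) ≠ 0 := Nat.cast_add_one_ne_zero k
  unfold cc
  rw [ascPochhammer_succ_right]
  simp only [Polynomial.eval_mul, Polynomial.eval_add, Polynomial.eval_X,
    Polynomial.eval_natCast, Nat.factorial_succ, Nat.cast_mul]
  push_cast
  have h2' : α*2 + (k:ℂ) ≠ 0 := by rw [mul_comm]; exact h2
  field_simp

lemma cc_norm_rec (α : ℂ) (hα : ∀ m : ℕ, 2 * α ≠ -(m : ℂ)) (k : ℕ) :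
    ‖cc α (k+1)‖ * (‖2*α + (k:ℂ)‖ * ((k:ℝ) + 1)) = ‖cc α k‖ * ‖α + (k:ℂ)‖^2 := by
  have h := congrArg norm (cc_rec α hα k)
  have hnk : ‖(k:ℂ) + 1‖ = (k:ℝ) + 1 := by
    rw [show ((k:ℂ) + 1) = ((k+1:ℕ):ℂ) by push_cast; ring, Complex.norm_natCast]
    push_cast; ring
  simpa [norm_mul, norm_pow, hnk] using h

lemma cc_growth (α : ℂ) (hα : ∀ m : ℕ, 2 * α ≠ -(m : ℂ)) {q : ℝ} (hq : 1 < q) :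
    ∃ C : ℝ, 0 < C ∧ ∀ k, ‖cc α k‖ ≤ C * q ^ k := by
  set A := ‖α‖ with hA
  have hA0 : (0:ℝ) ≤ A := norm_nonneg α
  set R : ℝ := ((2*A+1)*(q+1) + A^2) / (q-1) with hRdef
  have hqne : q - 1 ≠ 0 := by intro h; linarith
  have hR : (q-1) * R = (2*A+1)*(q+1) + A^2 := by
    rw [hRdef, mul_comm, div_mul_cancel₀ _ hqne]
  have hR0 : 0 ≤ R := by
    rw [hRdef]
    apply div_nonneg (by nlinarith) (by linarith)
  set N : ℕ := ⌈R + 2*A + 1⌉₊ with hNdef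
  have hstep : ∀ k : ℕ, N ≤ k → ‖cc α (k+1)‖ ≤ q * ‖cc α k‖ := by
    intro k hk
    have hkR : R + 2*A + 1 ≤ (k:ℝ) := le_trans (Nat.le_ceil _) (Nat.cast_le.2 hk)
    have hk0 : (0:ℝ) ≤ k := Nat.cast_nonneg k
    have hRk : R ≤ (k:ℝ) := by linarith
    have hkA : 2*A + 1 ≤ (k:ℝ) := by linarith
    have key : (A + k)^2 ≤ q * (((k:ℝ) - 2*A) * ((k:ℝ)+1)) := by
      have h1 : (q-1)*(R*k) ≤ (q-1)*((k:ℝ)*k) :=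
        mul_le_mul_of_nonneg_left (mul_le_mul_of_nonneg_right hRk hk0) (by linarith)
      have h4 : ((q-1)*R)*k = ((2*A+1)*(q+1) + A^2)*k := by rw [hR]
      have h2 : q*A ≤ q*(k:ℝ) := mul_le_mul_of_nonneg_left (by linarith) (by linarith)
      have h3 : A^2*1 ≤ A^2*(k:ℝ) := mul_le_mul_of_nonneg_left (by linarith) (by positivity)
      nlinarith [h1, h4, h2, h3]
    have hn1 : ‖α + (k:ℂ)‖ ≤ A + k := by
      calc ‖α + (k:ℂ)‖ ≤ ‖α‖ + ‖(k:ℂ)‖ := norm_add_le _ _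
        _ = A + k := by simp [Complex.norm_natCast, hA]
    have hn2 : (k:ℝ) - 2*A ≤ ‖2*α + (k:ℂ)‖ := by
      have h2A : ‖(2:ℂ)*α‖ = 2*A := by
        rw [norm_mul, hA]; norm_num
      have h5 : ‖(k:ℂ)‖ ≤ ‖2*α + (k:ℂ)‖ + ‖2*α‖ := by
        calc ‖(k:ℂ)‖ = ‖(2*α + (k:ℂ)) - 2*α‖ := by ring_nf
          _ ≤ ‖2*α + (k:ℂ)‖ + ‖2*α‖ := norm_sub_le _ _
      rw [h2A, Complex.norm_natCast] at h5
      linarith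
    have hP : (0:ℝ) < ‖2*α + (k:ℂ)‖ * ((k:ℝ)+1) := by
      have hne : (2*α + (k:ℂ)) ≠ 0 := fun h => hα k (by linear_combination h)
      have := norm_pos_iff.2 hne
      positivity
    have key2 : ‖α + (k:ℂ)‖^2 ≤ q * (‖2*α + (k:ℂ)‖ * ((k:ℝ)+1)) := by
      calc ‖α + (k:ℂ)‖^2 ≤ (A + k)^2 := by
            apply pow_le_pow_left₀ (norm_nonneg _) hn1
        _ ≤ q * (((k:ℝ) - 2*A) * ((k:ℝ)+1)) := key
        _ ≤ q * (‖2*α + (k:ℂ)‖ * ((k:ℝ)+1)) := by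
            apply mul_le_mul_of_nonneg_left _ (by linarith)
            apply mul_le_mul_of_nonneg_right hn2 (by linarith)
    have heq := cc_norm_rec α hα k
    have hfin : ‖cc α (k+1)‖ * (‖2*α + (k:ℂ)‖ * ((k:ℝ)+1))
        ≤ (q * ‖cc α k‖) * (‖2*α + (k:ℂ)‖ * ((k:ℝ)+1)) := by
      rw [heq]
      calc ‖cc α k‖ * ‖α + (k:ℂ)‖^2
          ≤ ‖cc α k‖ * (q * (‖2*α + (k:ℂ)‖ * ((k:ℝ)+1))) :=
            mul_le_mul_of_nonneg_left key2 (norm_nonneg _)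
        _ = (q * ‖cc α k‖) * (‖2*α + (k:ℂ)‖ * ((k:ℝ)+1)) := by ring
    exact le_of_mul_le_mul_right hfin hP
  have hind : ∀ j : ℕ, ‖cc α (N + j)‖ ≤ ‖cc α N‖ * q ^ j := by
    intro j
    induction j with
    | zero => simp
    | succ n ih =>
      calc ‖cc α (N + (n+1))‖ = ‖cc α ((N + n) + 1)‖ := rfl
        _ ≤ q * ‖cc α (N + n)‖ := hstep _ (Nat.le_add_right _ _)
        _ ≤ q * (‖cc α N‖ * q ^ n) := mul_le_mul_of_nonneg_left ih (by linarith)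
        _ = ‖cc α N‖ * q ^ (n+1) := by ring
  set C : ℝ := (∑ i ∈ Finset.range (N+1), ‖cc α i‖) + 1 with hC
  have hC0 : 0 < C := by
    rw [hC]
    have : 0 ≤ ∑ i ∈ Finset.range (N+1), ‖cc α i‖ :=
      Finset.sum_nonneg fun i _ => norm_nonneg _
    linarith
  refine ⟨C, hC0, fun k => ?_⟩
  have hq1 : (1:ℝ) ≤ q := hq.le
  have hqk : (1:ℝ) ≤ q ^ k := one_le_pow₀ hq1
  rcases le_or_gt k N with hkN | hNk
  · have h1 : ‖cc α k‖ ≤ ∑ i ∈ Finset.range (N+1), ‖cc α i‖ :=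
      Finset.single_le_sum (fun i _ => norm_nonneg _) (Finset.mem_range.2 (by omega))
    calc ‖cc α k‖ ≤ C := by rw [hC]; linarith
      _ = C * 1 := by ring
      _ ≤ C * q ^ k := mul_le_mul_of_nonneg_left hqk hC0.le
  · obtain ⟨j, rfl⟩ : ∃ j, k = N + j := ⟨k - N, by omega⟩
    have h2 : ‖cc α N‖ ≤ C := by
      have h3 : ‖cc α N‖ ≤ ∑ i ∈ Finset.range (N+1), ‖cc α i‖ :=
        Finset.single_le_sum (fun i _ => norm_nonneg _) (Finset.mem_range.2 (by omega))
      rw [hC]; linarith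
    have h3 : q ^ j ≤ q ^ (N + j) := pow_le_pow_right₀ hq1 (by omega)
    calc ‖cc α (N+j)‖ ≤ ‖cc α N‖ * q ^ j := hind j
      _ ≤ C * q ^ j := mul_le_mul_of_nonneg_right h2 (by positivity)
      _ ≤ C * q ^ (N+j) := mul_le_mul_of_nonneg_left h3 hC0.le
lemma master (α : ℂ) (hα : ∀ m : ℕ, 2 * α ≠ -(m : ℂ)) {x : ℝ} (hx0 : 0 ≤ x) (hx1 : x < 1) :
    Summable fun k : ℕ => ‖cc α k‖ * (2*‖α‖ + k + 2)^2 * x ^ k := by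
  set q : ℝ := 2 / (1 + x) with hqdef
  have hx10 : (0:ℝ) < 1 + x := by linarith
  have hq1 : 1 < q := by
    rw [hqdef, lt_div_iff₀ hx10]; linarith
  have hqx : 0 ≤ q * x ∧ q * x < 1 := by
    constructor
    · positivity
    · rw [hqdef, div_mul_eq_mul_div, div_lt_one hx10]; linarith
  obtain ⟨C, hC0, hC⟩ := cc_growth α hα hq1
  have hr : ‖q * x‖ < 1 := by rw [Real.norm_eq_abs, _root_.abs_of_nonneg hqx.1]; exact hqx.2
  have h2 : Summable (fun k : ℕ => ((k:ℝ))^2 * (q*x)^k) :=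
    summable_pow_mul_geometric_of_norm_lt_one 2 hr
  have h1 : Summable (fun k : ℕ => ((k:ℝ))^1 * (q*x)^k) :=
    summable_pow_mul_geometric_of_norm_lt_one 1 hr
  have h0 : Summable (fun k : ℕ => ((k:ℝ))^0 * (q*x)^k) :=
    summable_pow_mul_geometric_of_norm_lt_one 0 hr
  have hg : Summable (fun k : ℕ => (((k:ℝ))+1)^2 * (q*x)^k) := by
    apply Summable.congr ((h2.add (h1.mul_left 2)).add h0)
    intro k; ring
  have hsum : Summable (fun k : ℕ => C * ((2*‖α‖+2)^2 * ((((k:ℝ))+1)^2 * (q*x)^k))) :=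
    (hg.mul_left _).mul_left _
  apply Summable.of_nonneg_of_le (fun k => by positivity) (fun k => ?_) hsum
  have hB : (2*‖α‖ + (k:ℝ) + 2) ≤ (2*‖α‖+2) * ((k:ℝ)+1) := by
    have := norm_nonneg α
    have : (0:ℝ) ≤ (k:ℝ) := Nat.cast_nonneg k
    nlinarith [norm_nonneg α]
  calc ‖cc α k‖ * (2*‖α‖ + k + 2)^2 * x ^ k
      ≤ (C * q ^ k) * ((2*‖α‖+2) * ((k:ℝ)+1))^2 * x ^ k := by
        apply mul_le_mul_of_nonneg_right _ (by positivity)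
        apply mul_le_mul (hC k) (pow_le_pow_left₀ (by positivity) hB 2) (by positivity)
        positivity
    _ = C * ((2*‖α‖+2)^2 * ((((k:ℝ))+1)^2 * (q*x)^k)) := by
        rw [mul_pow (q) (x)]
        ring
  done

lemma summable_of_bound (α : ℂ) (hα : ∀ m : ℕ, 2 * α ≠ -(m : ℂ)) {x : ℝ}
    (hx0 : 0 ≤ x) (hx1 : x < 1) (g : ℕ → ℂ) (M : ℝ)
    (h : ∀ k, ‖g k‖ ≤ M * (‖cc α k‖ * (2*‖α‖ + k + 2)^2 * x^k)) : Summable g :=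
  Summable.of_norm_bounded ((master α hα hx0 hx1).mul_left M) h

lemma cpow_norm_le {bL bU r : ℝ} (h0 : 1 < bL) (h1 : bL ≤ r) (h2 : r ≤ bU) (β : ℂ) (k : ℕ) :
    ‖((r : ℂ)) ^ (β - (k:ℂ))‖ ≤ max (bL ^ β.re) (bU ^ β.re) * (bL⁻¹) ^ k := by
  have hr0 : (0:ℝ) < r := by linarith
  have hbL0 : (0:ℝ) < bL := by linarith
  rw [Complex.norm_cpow_eq_rpow_re_of_pos hr0]
  have hre : (β - (k:ℂ)).re = β.re - (k:ℝ) := by simp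
  rw [hre, Real.rpow_sub hr0, Real.rpow_natCast]
  have hmax : r ^ β.re ≤ max (bL ^ β.re) (bU ^ β.re) := by
    rcases le_total 0 β.re with h | h
    · exact le_max_of_le_right (Real.rpow_le_rpow hr0.le h2 h)
    · exact le_max_of_le_left (Real.rpow_le_rpow_of_nonpos hbL0 h1 h)
  have hpow : bL ^ k ≤ r ^ k := pow_le_pow_left₀ hbL0.le h1 k
  calc r ^ β.re / r ^ k ≤ max (bL ^ β.re) (bU ^ β.re) / bL ^ k :=
        div_le_div₀ (le_trans (Real.rpow_nonneg hbL0.le β.re) (le_max_left _ _)) hmax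
          (by positivity) hpow
    _ = max (bL ^ β.re) (bU ^ β.re) * (bL⁻¹) ^ k := by rw [div_eq_mul_inv, inv_pow]

noncomputable def FF (α : ℂ) (k : ℕ) (t : ℝ) : ℂ :=
  cc α k * ((1:ℂ) - (t:ℂ)) ^ (-α - (k:ℂ))
noncomputable def FF' (α : ℂ) (k : ℕ) (t : ℝ) : ℂ :=
  cc α k * (α + (k:ℂ)) * ((1:ℂ) - (t:ℂ)) ^ (-α - (k:ℂ) - 1)
noncomputable def FF'' (α : ℂ) (k : ℕ) (t : ℝ) : ℂ :=
  cc α k * (α + (k:ℂ)) * (α + (k:ℂ) + 1) * ((1:ℂ) - (t:ℂ)) ^ (-α - (k:ℂ) - 1 - 1)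
noncomputable def ee (α : ℂ) (t : ℝ) (k : ℕ) : ℂ :=
  cc α k * (α + (k:ℂ))^2 * ((1:ℂ) - (t:ℂ)) ^ (-α - (k:ℂ) - 1)
noncomputable def ffn (α : ℂ) (t : ℝ) (k : ℕ) : ℂ :=
  cc α k * (k:ℂ) * ((k:ℂ) + 2*α - 1) * ((1:ℂ) - (t:ℂ)) ^ (-α - (k:ℂ))

lemma coe_base (t : ℝ) : (1:ℂ) - (t:ℂ) = ((1 - t : ℝ) : ℂ) := by push_cast; ring

lemma base_ne {t : ℝ} (ht : t < 1) : ((1:ℂ) - (t:ℂ)) ≠ 0 := by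
  rw [coe_base, Ne, Complex.ofReal_eq_zero]
  exact ne_of_gt (by linarith)

lemma base_hasDerivAt (t : ℝ) : HasDerivAt (fun s : ℝ => (1:ℂ) - (s:ℂ)) (-1) t := by
  simpa using (Complex.ofRealCLM.hasDerivAt (x := t)).const_sub (1:ℂ)

lemma base_slit {t : ℝ} (ht : t < 1) : ((1:ℂ) - (t:ℂ)) ∈ Complex.slitPlane := by
  rw [coe_base]
  exact Complex.ofReal_mem_slitPlane.2 (by linarith)

lemma hasDerivAt_FF (α : ℂ) (k : ℕ) {t : ℝ} (ht : t < 1) :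
    HasDerivAt (FF α k) (FF' α k t) t := by
  have h0 : HasDerivAt (fun z : ℂ => z ^ (-α - (k:ℂ))) ((-α - (k:ℂ)) * ((1:ℂ) - (t:ℂ)) ^ (-α - (k:ℂ) - 1)) ((1:ℂ) - (t:ℂ)) :=
    (Complex.hasStrictDerivAt_cpow_const (base_slit ht)).hasDerivAt
  have h1 : HasDerivAt ((fun z : ℂ => z ^ (-α - (k:ℂ))) ∘ (fun s : ℝ => (1:ℂ) - (s:ℂ)))
      ((-1 : ℂ) • ((-α - (k:ℂ)) * ((1:ℂ) - (t:ℂ)) ^ (-α - (k:ℂ) - 1))) t :=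
    HasDerivAt.scomp (x := t) (hg := h0) (hh := base_hasDerivAt t)
  have h := h1.const_mul (cc α k)
  refine h.congr_deriv ?_
  simp only [FF', smul_eq_mul]; ring

lemma hasDerivAt_FF' (α : ℂ) (k : ℕ) {t : ℝ} (ht : t < 1) :
    HasDerivAt (FF' α k) (FF'' α k t) t := by
  have h0 : HasDerivAt (fun z : ℂ => z ^ (-α - (k:ℂ) - 1)) ((-α - (k:ℂ) - 1) * ((1:ℂ) - (t:ℂ)) ^ (-α - (k:ℂ) - 1 - 1)) ((1:ℂ) - (t:ℂ)) :=
    (Complex.hasStrictDerivAt_cpow_const (base_slit ht)).hasDerivAt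
  have h1 : HasDerivAt ((fun z : ℂ => z ^ (-α - (k:ℂ) - 1)) ∘ (fun s : ℝ => (1:ℂ) - (s:ℂ)))
      ((-1 : ℂ) • ((-α - (k:ℂ) - 1) * ((1:ℂ) - (t:ℂ)) ^ (-α - (k:ℂ) - 1 - 1))) t :=
    HasDerivAt.scomp (x := t) (hg := h0) (hh := base_hasDerivAt t)
  have h := h1.const_mul (cc α k * (α + (k:ℂ)))
  refine h.congr_deriv ?_
  simp only [FF'', smul_eq_mul]; ring

lemma u_eq (α : ℂ) {t : ℝ} (ht : t < 1) :
    ((1 - t : ℝ) : ℂ) ^ (-α) * hypF α α (2 * α) (1 / (1 - t)) = ∑' k, FF α k t := by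
  have hpos : (0:ℝ) < 1 - t := by linarith
  have hne : ((1 - t : ℝ) : ℂ) ≠ 0 := by
    rw [Ne, Complex.ofReal_eq_zero]
    exact ne_of_gt hpos
  simp only [hypF, FF, cc]
  rw [← tsum_mul_left]
  refine tsum_congr fun k => ?_
  rw [coe_base t]
  rw [show ((1/(1-t) : ℝ) : ℂ) = (((1-t:ℝ):ℂ))⁻¹ by rw [one_div, Complex.ofReal_inv]]
  rw [inv_pow, ← Complex.cpow_natCast ((1-t:ℝ):ℂ) k, ← Complex.cpow_neg,
    show (-α - (k:ℂ)) = -α + (-(k:ℂ)) by ring, Complex.cpow_add _ _ hne]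
  ring

lemma ffn_zero (α : ℂ) (t : ℝ) : ffn α t 0 = 0 := by simp [ffn]

lemma ffn_succ (α : ℂ) (hα : ∀ m : ℕ, 2 * α ≠ -(m : ℂ)) {t : ℝ} (ht : t < 1) (k : ℕ) :
    ffn α t (k+1) = ee α t k := by
  simp only [ffn, ee]
  rw [show ((k+1:ℕ):ℂ) = (k:ℂ)+1 by push_cast; ring,
    show (-α - ((k:ℂ)+1)) = -α-(k:ℂ)-1 by ring]
  linear_combination ((1:ℂ) - (t:ℂ)) ^ (-α-(k:ℂ)-1) * cc_rec α hα k

lemma perk (α : ℂ) {t : ℝ} (ht : t < 1) (k : ℕ) :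
    (t:ℂ) * (1 - (t:ℂ)) * FF'' α k t + (1 - 2*(t:ℂ)) * FF' α k t
      + α*(α-1) * FF α k t = ee α t k - ffn α t k := by
  have hz := base_ne ht
  have hw1 : ((1:ℂ)-(t:ℂ)) ^ (-α-(k:ℂ)-1)
      = ((1:ℂ)-(t:ℂ)) ^ (-α-(k:ℂ)-1-1) * ((1:ℂ)-(t:ℂ)) := by
    conv_lhs => rw [show (-α-(k:ℂ)-1) = (-α-(k:ℂ)-1-1) + 1 by ring]
    rw [Complex.cpow_add _ _ hz, Complex.cpow_one]
  have hw2 : ((1:ℂ)-(t:ℂ)) ^ (-α-(k:ℂ))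
      = ((1:ℂ)-(t:ℂ)) ^ (-α-(k:ℂ)-1-1) * (((1:ℂ)-(t:ℂ)) * ((1:ℂ)-(t:ℂ))) := by
    conv_lhs => rw [show (-α-(k:ℂ)) = ((-α-(k:ℂ)-1-1) + 1) + 1 by ring]
    rw [Complex.cpow_add _ _ hz, Complex.cpow_add _ _ hz, Complex.cpow_one]
    ring
  simp only [FF, FF', FF'', ee, ffn]
  rw [hw1, hw2]
  ring

/-- for α ∈ ℂ with 2α not a nonpositive integer and every real t < 0,
u(t) := (1−t)^{−α}·F(α,α;2α;1/(1−t)) satisfies t(1−t)u'' + (1−2t)u' + α(α−1)u = 0. -/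
theorem stmt_10 (α : ℂ) (hα : ∀ m : ℕ, 2 * α ≠ -(m : ℂ)) (u : ℝ → ℂ)
    (hu : ∀ t : ℝ, u t = ((1 - t : ℝ) : ℂ) ^ (-α) * hypF α α (2 * α) (1 / (1 - t))) :
    ∀ t : ℝ, t < 0 →
      (t : ℂ) * (1 - (t : ℂ)) * deriv (deriv u) t + (1 - 2 * (t : ℂ)) * deriv u t
        + α * (α - 1) * u t = 0 := by
  intro t ht
  set b1 : ℝ := 1 - t/2 with hb1def
  set b2 : ℝ := 2 - t with hb2def
  set x : ℝ := b1⁻¹ with hxdef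
  have hb1 : (1:ℝ) < b1 := by rw [hb1def]; linarith
  have hb10 : (0:ℝ) < b1 := by linarith
  have hx0 : (0:ℝ) ≤ x := by rw [hxdef]; positivity
  have hx1 : x < 1 := by rw [hxdef]; exact inv_lt_one_of_one_lt₀ hb1
  set S : Set ℝ := Set.Ioo (t - 1) (t/2) with hSdef
  have hSo : IsOpen S := isOpen_Ioo
  have hSc : IsPreconnected S := isPreconnected_Ioo
  have htS : t ∈ S := by rw [hSdef]; exact ⟨by linarith, by linarith⟩
  have hmem : ∀ s ∈ S, b1 ≤ 1 - s ∧ 1 - s ≤ b2 ∧ s < 1 := by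
    intro s hs
    rw [hSdef, Set.mem_Ioo] at hs
    exact ⟨by rw [hb1def]; linarith [hs.2], by rw [hb2def]; linarith [hs.1],
      by linarith [hs.2]⟩
  set M0 : ℝ := max (b1 ^ (-α).re) (b2 ^ (-α).re) with hM0
  set M1 : ℝ := max (b1 ^ (-α-1:ℂ).re) (b2 ^ (-α-1:ℂ).re) with hM1
  set M2 : ℝ := max (b1 ^ (-α-1-1:ℂ).re) (b2 ^ (-α-1-1:ℂ).re) with hM2
  have hM0n : 0 ≤ M0 := by rw [hM0]; exact le_max_of_le_left (Real.rpow_nonneg hb10.le _)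
  have hM1n : 0 ≤ M1 := by rw [hM1]; exact le_max_of_le_left (Real.rpow_nonneg hb10.le _)
  have hM2n : 0 ≤ M2 := by rw [hM2]; exact le_max_of_le_left (Real.rpow_nonneg hb10.le _)
  -- generic cpow bound on S
  have hcpow : ∀ (β : ℂ) (k : ℕ), ∀ s ∈ S,
      ‖((1:ℂ) - (s:ℂ)) ^ (β - (k:ℂ))‖ ≤ max (b1 ^ β.re) (b2 ^ β.re) * x ^ k := by
    intro β k s hs
    obtain ⟨hm1, hm2, _⟩ := hmem s hs
    rw [coe_base s, hxdef]
    exact cpow_norm_le hb1 hm1 hm2 β k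
  have hA0 : (0:ℝ) ≤ ‖α‖ := norm_nonneg α
  have hBpos : ∀ k : ℕ, (0:ℝ) ≤ 2*‖α‖ + k + 2 := fun k => by
    have : (0:ℝ) ≤ (k:ℝ) := Nat.cast_nonneg k
    linarith
  have hB1 : ∀ k : ℕ, (1:ℝ) ≤ 2*‖α‖ + k + 2 := fun k => by
    have : (0:ℝ) ≤ (k:ℝ) := Nat.cast_nonneg k
    linarith
  have hnk : ∀ k : ℕ, ‖α + (k:ℂ)‖ ≤ 2*‖α‖ + k + 2 := fun k => by
    calc ‖α + (k:ℂ)‖ ≤ ‖α‖ + ‖(k:ℂ)‖ := norm_add_le _ _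
      _ = ‖α‖ + k := by rw [Complex.norm_natCast]
      _ ≤ 2*‖α‖ + k + 2 := by linarith
  have hnk1 : ∀ k : ℕ, ‖α + (k:ℂ) + 1‖ ≤ 2*‖α‖ + k + 2 := fun k => by
    calc ‖α + (k:ℂ) + 1‖ ≤ ‖α + (k:ℂ)‖ + ‖(1:ℂ)‖ := norm_add_le _ _
      _ ≤ (‖α‖ + k) + 1 := by
          rw [norm_one]
          have := norm_add_le α ((k:ℂ))
          rw [Complex.norm_natCast] at this
          linarith
      _ ≤ 2*‖α‖ + k + 2 := by linarith
  have hnkk : ∀ k : ℕ, ‖(k:ℂ)‖ ≤ 2*‖α‖ + k + 2 := fun k => by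
    rw [Complex.norm_natCast]
    have : (0:ℝ) ≤ (k:ℝ) := Nat.cast_nonneg k
    linarith
  have hnkf : ∀ k : ℕ, ‖(k:ℂ) + 2*α - 1‖ ≤ 2*‖α‖ + k + 2 := fun k => by
    have h2A : ‖(2:ℂ)*α‖ = 2*‖α‖ := by rw [norm_mul]; norm_num
    calc ‖(k:ℂ) + 2*α - 1‖ ≤ ‖(k:ℂ) + 2*α‖ + ‖(1:ℂ)‖ := norm_sub_le _ _
      _ ≤ (‖(k:ℂ)‖ + ‖2*α‖) + 1 := by
          rw [norm_one]
          have := norm_add_le ((k:ℂ)) (2*α)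
          linarith
      _ = (k + 2*‖α‖) + 1 := by rw [Complex.norm_natCast, h2A]
      _ ≤ 2*‖α‖ + k + 2 := by linarith
  -- bounds for the three series on S
  have hbF : ∀ (k:ℕ), ∀ s ∈ S, ‖FF α k s‖ ≤ M0 * (‖cc α k‖ * (2*‖α‖+k+2)^2 * x^k) := by
    intro k s hs
    have h := hcpow (-α) k s hs
    rw [← hM0] at h
    have hxk : (0:ℝ) ≤ x ^ k := pow_nonneg hx0 k
    calc ‖FF α k s‖ = ‖cc α k‖ * ‖((1:ℂ)-(s:ℂ)) ^ (-α - (k:ℂ))‖ := by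
          simp only [FF]; rw [norm_mul]
      _ ≤ ‖cc α k‖ * (M0 * x ^ k) := mul_le_mul_of_nonneg_left h (norm_nonneg _)
      _ = M0 * (‖cc α k‖ * 1 * x^k) := by ring
      _ ≤ M0 * (‖cc α k‖ * (2*‖α‖+k+2)^2 * x^k) := by
          apply mul_le_mul_of_nonneg_left _ hM0n
          apply mul_le_mul_of_nonneg_right _ hxk
          apply mul_le_mul_of_nonneg_left _ (norm_nonneg _)
          exact one_le_pow₀ (hB1 k)
  have hbF' : ∀ (k:ℕ), ∀ s ∈ S, ‖FF' α k s‖ ≤ M1 * (‖cc α k‖ * (2*‖α‖+k+2)^2 * x^k) := by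
    intro k s hs
    have h := hcpow (-α-1) k s hs
    rw [← hM1] at h
    have hxk : (0:ℝ) ≤ x ^ k := pow_nonneg hx0 k
    have he : (-α - (k:ℂ) - 1) = (-α-1) - (k:ℂ) := by ring
    calc ‖FF' α k s‖ = ‖cc α k‖ * ‖α + (k:ℂ)‖ * ‖((1:ℂ)-(s:ℂ)) ^ ((-α-1) - (k:ℂ))‖ := by
          simp only [FF']; rw [he, norm_mul, norm_mul]
      _ ≤ ‖cc α k‖ * ‖α + (k:ℂ)‖ * (M1 * x ^ k) :=
          mul_le_mul_of_nonneg_left h (by positivity)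
      _ = M1 * (‖cc α k‖ * (‖α + (k:ℂ)‖ * 1) * x^k) := by ring
      _ ≤ M1 * (‖cc α k‖ * ((2*‖α‖+k+2) * (2*‖α‖+k+2)) * x^k) := by
          apply mul_le_mul_of_nonneg_left _ hM1n
          apply mul_le_mul_of_nonneg_right _ hxk
          apply mul_le_mul_of_nonneg_left _ (norm_nonneg _)
          exact mul_le_mul (hnk k) (hB1 k) zero_le_one (hBpos k)
      _ = M1 * (‖cc α k‖ * (2*‖α‖+k+2)^2 * x^k) := by ring
  have hbF'' : ∀ (k:ℕ), ∀ s ∈ S, ‖FF'' α k s‖ ≤ M2 * (‖cc α k‖ * (2*‖α‖+k+2)^2 * x^k) := by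
    intro k s hs
    have h := hcpow (-α-1-1) k s hs
    rw [← hM2] at h
    have hxk : (0:ℝ) ≤ x ^ k := pow_nonneg hx0 k
    have he : (-α - (k:ℂ) - 1 - 1) = (-α-1-1) - (k:ℂ) := by ring
    calc ‖FF'' α k s‖
        = ‖cc α k‖ * ‖α + (k:ℂ)‖ * ‖α + (k:ℂ) + 1‖ * ‖((1:ℂ)-(s:ℂ)) ^ ((-α-1-1) - (k:ℂ))‖ := by
          simp only [FF'']; rw [he, norm_mul, norm_mul, norm_mul]
      _ ≤ ‖cc α k‖ * ‖α + (k:ℂ)‖ * ‖α + (k:ℂ) + 1‖ * (M2 * x ^ k) :=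
          mul_le_mul_of_nonneg_left h (by positivity)
      _ = M2 * (‖cc α k‖ * (‖α + (k:ℂ)‖ * ‖α + (k:ℂ) + 1‖) * x^k) := by ring
      _ ≤ M2 * (‖cc α k‖ * ((2*‖α‖+k+2) * (2*‖α‖+k+2)) * x^k) := by
          apply mul_le_mul_of_nonneg_left _ hM2n
          apply mul_le_mul_of_nonneg_right _ hxk
          apply mul_le_mul_of_nonneg_left _ (norm_nonneg _)
          exact mul_le_mul (hnk k) (hnk1 k) (norm_nonneg _) (hBpos k)
      _ = M2 * (‖cc α k‖ * (2*‖α‖+k+2)^2 * x^k) := by ring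
  have hbe : ∀ (k:ℕ), ‖ee α t k‖ ≤ M1 * (‖cc α k‖ * (2*‖α‖+k+2)^2 * x^k) := by
    intro k
    have h := hcpow (-α-1) k t htS
    rw [← hM1] at h
    have hxk : (0:ℝ) ≤ x ^ k := pow_nonneg hx0 k
    have he : (-α - (k:ℂ) - 1) = (-α-1) - (k:ℂ) := by ring
    calc ‖ee α t k‖ = ‖cc α k‖ * ‖α + (k:ℂ)‖^2 * ‖((1:ℂ)-(t:ℂ)) ^ ((-α-1) - (k:ℂ))‖ := by
          simp only [ee]; rw [he, norm_mul, norm_mul, norm_pow]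
      _ ≤ ‖cc α k‖ * ‖α + (k:ℂ)‖^2 * (M1 * x ^ k) :=
          mul_le_mul_of_nonneg_left h (by positivity)
      _ = M1 * (‖cc α k‖ * ‖α + (k:ℂ)‖^2 * x^k) := by ring
      _ ≤ M1 * (‖cc α k‖ * (2*‖α‖+k+2)^2 * x^k) := by
          apply mul_le_mul_of_nonneg_left _ hM1n
          apply mul_le_mul_of_nonneg_right _ hxk
          apply mul_le_mul_of_nonneg_left _ (norm_nonneg _)
          exact pow_le_pow_left₀ (norm_nonneg _) (hnk k) 2
  have hbf : ∀ (k:ℕ), ‖ffn α t k‖ ≤ M0 * (‖cc α k‖ * (2*‖α‖+k+2)^2 * x^k) := by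
    intro k
    have h := hcpow (-α) k t htS
    rw [← hM0] at h
    have hxk : (0:ℝ) ≤ x ^ k := pow_nonneg hx0 k
    calc ‖ffn α t k‖
        = ‖cc α k‖ * ‖(k:ℂ)‖ * ‖(k:ℂ) + 2*α - 1‖ * ‖((1:ℂ)-(t:ℂ)) ^ (-α - (k:ℂ))‖ := by
          simp only [ffn]; rw [norm_mul, norm_mul, norm_mul]
      _ ≤ ‖cc α k‖ * ‖(k:ℂ)‖ * ‖(k:ℂ) + 2*α - 1‖ * (M0 * x ^ k) :=
          mul_le_mul_of_nonneg_left h (by positivity)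
      _ = M0 * (‖cc α k‖ * (‖(k:ℂ)‖ * ‖(k:ℂ) + 2*α - 1‖) * x^k) := by ring
      _ ≤ M0 * (‖cc α k‖ * ((2*‖α‖+k+2) * (2*‖α‖+k+2)) * x^k) := by
          apply mul_le_mul_of_nonneg_left _ hM0n
          apply mul_le_mul_of_nonneg_right _ hxk
          apply mul_le_mul_of_nonneg_left _ (norm_nonneg _)
          exact mul_le_mul (hnkk k) (hnkf k) (norm_nonneg _) (hBpos k)
      _ = M0 * (‖cc α k‖ * (2*‖α‖+k+2)^2 * x^k) := by ring
  -- summability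
  have Su : Summable (fun k => FF α k t) :=
    summable_of_bound α hα hx0 hx1 _ M0 (fun k => hbF k t htS)
  have Su' : Summable (fun k => FF' α k t) :=
    summable_of_bound α hα hx0 hx1 _ M1 (fun k => hbF' k t htS)
  have Su'' : Summable (fun k => FF'' α k t) :=
    summable_of_bound α hα hx0 hx1 _ M2 (fun k => hbF'' k t htS)
  have Se : Summable (ee α t) := summable_of_bound α hα hx0 hx1 _ M1 hbe
  have Sf : Summable (ffn α t) := summable_of_bound α hα hx0 hx1 _ M0 hbf
  have hsum1 : Summable (fun k:ℕ => M1 * (‖cc α k‖ * (2*‖α‖+k+2)^2 * x^k)) :=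
    (master α hα hx0 hx1).mul_left M1
  have hsum2 : Summable (fun k:ℕ => M2 * (‖cc α k‖ * (2*‖α‖+k+2)^2 * x^k)) :=
    (master α hα hx0 hx1).mul_left M2
  -- derivative of the series
  have key1 : ∀ s ∈ S, HasDerivAt (fun y => ∑' k, FF α k y) (∑' k, FF' α k s) s := by
    intro s hs
    exact hasDerivAt_tsum_of_isPreconnected hsum1 hSo hSc
      (fun k y hy => hasDerivAt_FF α k (hmem y hy).2.2)
      (fun k y hy => hbF' k y hy) htS Su hs
  have key2 : ∀ s ∈ S, HasDerivAt (fun y => ∑' k, FF' α k y) (∑' k, FF'' α k s) s := by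
    intro s hs
    exact hasDerivAt_tsum_of_isPreconnected hsum2 hSo hSc
      (fun k y hy => hasDerivAt_FF' α k (hmem y hy).2.2)
      (fun k y hy => hbF'' k y hy) htS Su' hs
  have hueq : ∀ s ∈ S, u s = ∑' k, FF α k s := by
    intro s hs
    rw [hu s]
    exact u_eq α (hmem s hs).2.2
  have huD : ∀ s ∈ S, HasDerivAt u (∑' k, FF' α k s) s := by
    intro s hs
    exact (key1 s hs).congr_of_eventuallyEq
      (Filter.eventuallyEq_of_mem (hSo.mem_nhds hs) (fun y hy => hueq y hy))
  have hd1 : deriv u t = ∑' k, FF' α k t := (huD t htS).deriv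
  have hd2 : deriv (deriv u) t = ∑' k, FF'' α k t := by
    have hev : deriv u =ᶠ[nhds t] (fun y => ∑' k, FF' α k y) :=
      Filter.eventuallyEq_of_mem (hSo.mem_nhds htS) (fun y hy => (huD y hy).deriv)
    rw [hev.deriv_eq, (key2 t htS).deriv]
  -- final algebra
  have key0 : (∑' k, ffn α t k) = ∑' k, ee α t k := by
    rw [Sf.tsum_eq_zero_add, ffn_zero, zero_add]
    exact tsum_congr (fun k => ffn_succ α hα (by linarith) k)
  rw [hd2, hd1, hueq t htS]
  calc (t:ℂ) * (1 - (t:ℂ)) * ∑' k, FF'' α k t + (1 - 2*(t:ℂ)) * ∑' k, FF' α k t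
      + α*(α-1) * ∑' k, FF α k t
      = ∑' k, ((t:ℂ) * (1 - (t:ℂ)) * FF'' α k t + (1 - 2*(t:ℂ)) * FF' α k t
          + α*(α-1) * FF α k t) := by
        rw [((Su''.mul_left _).add (Su'.mul_left _)).tsum_add (Su.mul_left _),
          (Su''.mul_left _).tsum_add (Su'.mul_left _), tsum_mul_left, tsum_mul_left,
          tsum_mul_left]
    _ = ∑' k, (ee α t k - ffn α t k) := tsum_congr (perk α (by linarith))
    _ = (∑' k, ee α t k) - (∑' k, ffn α t k) := Se.tsum_sub Sf
    _ = 0 := by rw [key0, sub_self]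
end

section
/- Let α ∈ ℂ be such that 2−2α is not a nonpositive integer. For every real t < 0, the function u(t) := (1−t)^{α−1}·F(1−α, 1−α; 2−2α; 1/(1−t)) satisfies t(1−t)·u''(t) + (1−2t)·u'(t) + α(α−1)·u(t) = 0. (Note that 1/(1−t) ∈ (0,1) for t < 0, so the defining series converges.) -/
open Filter Topology

namespace Stmt11Aux

noncomputable def d (α : ℂ) (k : ℕ) : ℂ :=
  (ascPochhammer ℂ k).eval (1 - α) * (ascPochhammer ℂ k).eval (1 - α) /
    ((ascPochhammer ℂ k).eval (2 - 2 * α) * (Nat.factorial k : ℂ))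

noncomputable def g (α : ℂ) (z : ℂ) : ℂ := ∑' k : ℕ, d α k * z ^ k
noncomputable def g1 (α : ℂ) (z : ℂ) : ℂ := ∑' k : ℕ, d α k * ((k : ℂ) * z ^ (k - 1))
noncomputable def g2 (α : ℂ) (z : ℂ) : ℂ :=
  ∑' k : ℕ, d α k * ((k : ℂ) * (((k : ℂ) - 1) * z ^ (k - 2)))

variable {α : ℂ} (hα : ∀ m : ℕ, 2 - 2 * α ≠ -(m : ℂ))
include hα

lemma hc (k : ℕ) : (2 - 2 * α) + (k : ℂ) ≠ 0 := by
  intro h; exact hα k (by linear_combination h)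

lemma ha (k : ℕ) : (1 - α) + (k : ℂ) ≠ 0 := by
  intro h; exact hα (2 * k) (by push_cast; linear_combination 2 * h)

lemma pochC_ne (k : ℕ) : (ascPochhammer ℂ k).eval (2 - 2 * α) ≠ 0 := by
  induction k with
  | zero => simp
  | succ n ih =>
    rw [ascPochhammer_succ_eval]
    exact mul_ne_zero ih (by have := hc hα n; intro h; exact this (by linear_combination h))

lemma pochA_ne (k : ℕ) : (ascPochhammer ℂ k).eval (1 - α) ≠ 0 := by
  induction k with
  | zero => simp
  | succ n ih =>
    rw [ascPochhammer_succ_eval]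
    exact mul_ne_zero ih (by have := ha hα n; intro h; exact this (by linear_combination h))

lemma dk_ne (k : ℕ) : d α k ≠ 0 :=
  div_ne_zero (mul_ne_zero (pochA_ne hα k) (pochA_ne hα k))
    (mul_ne_zero (pochC_ne hα k) (Nat.cast_ne_zero.mpr (Nat.factorial_ne_zero k)))

lemma d_rec (k : ℕ) :
    d α (k + 1) * (((k : ℂ) + 1) * ((2 - 2 * α) + (k : ℂ)))
      = d α k * (((1 - α) + (k : ℂ)) * ((1 - α) + (k : ℂ))) := by
  unfold d
  rw [ascPochhammer_succ_eval, ascPochhammer_succ_eval, Nat.factorial_succ]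
  have h1 := pochC_ne hα k
  have h2 : ((Nat.factorial k : ℂ)) ≠ 0 := Nat.cast_ne_zero.mpr (Nat.factorial_ne_zero k)
  have h3 := hc hα k
  have h4 : ((k : ℂ) + 1) ≠ 0 := by
    have : ((k : ℂ) + 1) = ((k + 1 : ℕ) : ℂ) := by push_cast; ring
    rw [this]; exact_mod_cast Nat.succ_ne_zero k
  push_cast
  rw [div_mul_eq_mul_div, div_mul_eq_mul_div, div_eq_div_iff (mul_ne_zero (mul_ne_zero h1 h3) (by simpa using mul_ne_zero h4 h2)) (mul_ne_zero h1 h2)]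
  ring




omit hα in
lemma tendsto_norm_ratio (x y : ℂ) (hy : ∀ k : ℕ, y + (k : ℂ) ≠ 0) :
    Tendsto (fun k : ℕ => ‖x + (k : ℂ)‖ / ‖y + (k : ℂ)‖) atTop (𝓝 1) := by
  have hnorm : Tendsto (fun k : ℕ => ‖y + (k : ℂ)‖) atTop atTop := by
    apply tendsto_atTop_mono' _ _
      (tendsto_atTop_add_const_right atTop (-‖y‖) (tendsto_natCast_atTop_atTop (R := ℝ)))
    filter_upwards with k
    have h1 : ‖(k : ℂ)‖ - ‖-y‖ ≤ ‖(k : ℂ) - (-y)‖ := norm_sub_norm_le _ _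
    simp only [norm_neg, sub_neg_eq_add, Complex.norm_natCast] at h1
    simpa [add_comm, sub_eq_add_neg] using h1
  have hdiff : Tendsto (fun k : ℕ => ‖x - y‖ / ‖y + (k : ℂ)‖) atTop (𝓝 0) :=
    Tendsto.div_atTop tendsto_const_nhds hnorm
  have hb : ∀ᶠ k : ℕ in atTop,
      ‖‖x + (k : ℂ)‖ / ‖y + (k : ℂ)‖ - 1‖ ≤ ‖x - y‖ / ‖y + (k : ℂ)‖ := by
    filter_upwards with k
    have h0 : 0 < ‖y + (k : ℂ)‖ := norm_pos_iff.2 (hy k)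
    have heq : ‖x + (k : ℂ)‖ / ‖y + (k : ℂ)‖ - 1
        = (‖x + (k : ℂ)‖ - ‖y + (k : ℂ)‖) / ‖y + (k : ℂ)‖ := by rw [sub_div, div_self h0.ne']
    rw [Real.norm_eq_abs, heq, abs_div, abs_of_pos h0]
    have h2 : |‖x + (k : ℂ)‖ - ‖y + (k : ℂ)‖| ≤ ‖(x + (k : ℂ)) - (y + (k : ℂ))‖ :=
      abs_norm_sub_norm_le _ _
    have h3 : (x + (k : ℂ)) - (y + (k : ℂ)) = x - y := by ring
    rw [h3] at h2
    gcongr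
  have := squeeze_zero_norm' hb hdiff
  simpa using this.add_const 1


omit hα in
lemma pow_nat_sub_le {r : ℝ} (h0 : 0 < r) (h1 : r ≤ 1) (k j : ℕ) :
    r ^ (k - j) ≤ r ^ k * (r⁻¹) ^ j := by
  rw [inv_pow, ← div_eq_mul_inv, le_div_iff₀ (by positivity), ← pow_add]
  exact pow_le_pow_of_le_one h0.le h1 (by omega)

lemma norm_d_rec (k : ℕ) :
    ‖d α (k + 1)‖ * (((k : ℝ) + 1) * ‖(2 - 2 * α) + (k : ℂ)‖)
      = ‖d α k‖ * (‖(1 - α) + (k : ℂ)‖ * ‖(1 - α) + (k : ℂ)‖) := by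
  have h := congrArg norm (d_rec hα k)
  rw [norm_mul, norm_mul, norm_mul, norm_mul] at h
  have hk1 : ‖(k : ℂ) + 1‖ = (k : ℝ) + 1 := by
    have : ((k : ℂ) + 1) = ((k + 1 : ℕ) : ℂ) := by push_cast; ring
    rw [this, Complex.norm_natCast]; push_cast; ring
  rw [hk1] at h
  exact h

lemma summable_master (r : ℝ) (h0 : 0 < r) (h1 : r < 1) :
    Summable (fun k : ℕ => ‖d α k‖ * ((k : ℝ) + 1) ^ 2 * r ^ k) := by
  apply summable_of_ratio_test_tendsto_lt_one h1
  · filter_upwards with k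
    have hd : 0 < ‖d α k‖ := norm_pos_iff.2 (dk_ne hα k)
    positivity
  · have h1ne : ∀ k : ℕ, (1 : ℂ) + (k : ℂ) ≠ 0 := by
      intro k
      have : ((1 : ℂ) + k) = ((k + 1 : ℕ) : ℂ) := by push_cast; ring
      rw [this]; exact_mod_cast Nat.succ_ne_zero k
    have hT1 := tendsto_norm_ratio (1 - α) 1 h1ne
    have hT2 := tendsto_norm_ratio (1 - α) (2 - 2 * α) (hc hα)
    have hT3 := tendsto_norm_ratio 2 1 h1ne
    have hR : Tendsto (fun k : ℕ =>
        (‖(1 - α) + (k : ℂ)‖ / ‖(2 - 2 * α) + (k : ℂ)‖)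
          * (‖(1 - α) + (k : ℂ)‖ / ‖(1 : ℂ) + (k : ℂ)‖)
          * ((‖(2 : ℂ) + (k : ℂ)‖ / ‖(1 : ℂ) + (k : ℂ)‖)
            * (‖(2 : ℂ) + (k : ℂ)‖ / ‖(1 : ℂ) + (k : ℂ)‖)) * r) atTop (𝓝 r) := by
      have := ((hT2.mul hT1).mul (hT3.mul hT3)).mul_const r
      simpa using this
    apply hR.congr
    intro k
    have hn1 : ‖(1 : ℂ) + (k : ℂ)‖ = (k : ℝ) + 1 := by
      have : ((1 : ℂ) + k) = ((k + 1 : ℕ) : ℂ) := by push_cast; ring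
      rw [this, Complex.norm_natCast]; push_cast; ring
    have hn2 : ‖(2 : ℂ) + (k : ℂ)‖ = (k : ℝ) + 2 := by
      have : ((2 : ℂ) + k) = ((k + 2 : ℕ) : ℂ) := by push_cast; ring
      rw [this, Complex.norm_natCast]; push_cast; ring
    have hA : 0 < ‖d α k‖ := norm_pos_iff.2 (dk_ne hα k)
    have hA1 : 0 < ‖d α (k+1)‖ := norm_pos_iff.2 (dk_ne hα (k+1))
    have hnc : 0 < ‖(2 - 2 * α) + (k : ℂ)‖ := norm_pos_iff.2 (hc hα k)
    have hk0 : (0:ℝ) < (k : ℝ) + 1 := by positivity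
    have hdk' : ‖d α (k + 1)‖
        = ‖d α k‖ * (‖(1 - α) + (k : ℂ)‖ * ‖(1 - α) + (k : ℂ)‖)
          / (((k : ℝ) + 1) * ‖(2 - 2 * α) + (k : ℂ)‖) := by
      rw [eq_div_iff (by positivity)]
      exact norm_d_rec hα k
    have hfk : ‖‖d α k‖ * ((k : ℝ) + 1) ^ 2 * r ^ k‖
        = ‖d α k‖ * ((k : ℝ) + 1) ^ 2 * r ^ k := Real.norm_of_nonneg (by positivity)
    have hfk1 : ‖‖d α (k+1)‖ * (((k+1 : ℕ) : ℝ) + 1) ^ 2 * r ^ (k+1)‖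
        = ‖d α (k+1)‖ * (((k:ℝ) + 2) ^ 2) * r ^ (k+1) := by
      rw [Real.norm_of_nonneg (by positivity)]; push_cast; ring
    rw [hn1, hn2, hfk, hfk1, hdk']
    rw [div_mul_div_comm, div_mul_div_comm, div_mul_div_comm, div_mul_eq_mul_div,
      div_mul_eq_mul_div, div_mul_eq_mul_div, div_div,
      div_eq_div_iff (by positivity) (by positivity)]
    ring


omit hα in
lemma bT0 {r : ℝ} (h0 : 0 < r) (h1 : r ≤ 1) {y : ℂ} (hy : ‖y‖ ≤ r) (k : ℕ) :
    ‖d α k * y ^ k‖ ≤ ‖d α k‖ * ((k : ℝ) + 1) ^ 2 * r ^ k * 1 := by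
  rw [norm_mul, norm_pow]
  have e1 : ‖y‖ ^ k ≤ r ^ k := pow_le_pow_left₀ (norm_nonneg y) hy k
  have e2 : (1:ℝ) ≤ ((k:ℝ) + 1) ^ 2 := by nlinarith [(Nat.cast_nonneg k : (0:ℝ) ≤ (k:ℝ))]
  calc ‖d α k‖ * ‖y‖ ^ k ≤ ‖d α k‖ * (((k:ℝ)+1)^2 * r ^ k) := by
        rw [show ((k:ℝ)+1)^2 * r^k = ((k:ℝ)+1)^2 * r^k from rfl]
        have := mul_le_mul e2 e1 (by positivity) (by positivity)
        calc ‖d α k‖ * ‖y‖ ^ k = ‖d α k‖ * (1 * ‖y‖ ^ k) := by ring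
          _ ≤ ‖d α k‖ * (((k:ℝ)+1)^2 * r ^ k) := by gcongr
    _ = ‖d α k‖ * ((k : ℝ) + 1) ^ 2 * r ^ k * 1 := by ring

omit hα in
lemma bT1 {r : ℝ} (h0 : 0 < r) (h1 : r ≤ 1) {y : ℂ} (hy : ‖y‖ ≤ r) (k : ℕ) :
    ‖d α k * ((k : ℂ) * y ^ (k - 1))‖ ≤ ‖d α k‖ * ((k : ℝ) + 1) ^ 2 * r ^ k * r⁻¹ := by
  rw [norm_mul, norm_mul, norm_pow, Complex.norm_natCast]
  have e1 : ‖y‖ ^ (k-1) ≤ r ^ k * r⁻¹ := by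
    calc ‖y‖ ^ (k-1) ≤ r ^ (k-1) := pow_le_pow_left₀ (norm_nonneg y) hy _
      _ ≤ r ^ k * r⁻¹ := by simpa using pow_nat_sub_le h0 h1 k 1
  have e2 : (k:ℝ) ≤ ((k:ℝ) + 1) ^ 2 := by nlinarith [(Nat.cast_nonneg k : (0:ℝ) ≤ (k:ℝ))]
  calc ‖d α k‖ * ((k:ℝ) * ‖y‖ ^ (k-1)) ≤ ‖d α k‖ * (((k:ℝ)+1)^2 * (r ^ k * r⁻¹)) := by
        gcongr
    _ = ‖d α k‖ * ((k : ℝ) + 1) ^ 2 * r ^ k * r⁻¹ := by ring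

omit hα in
lemma bT2 {r : ℝ} (h0 : 0 < r) (h1 : r ≤ 1) {y : ℂ} (hy : ‖y‖ ≤ r) (k : ℕ) :
    ‖d α k * ((k : ℂ) * (((k : ℂ) - 1) * y ^ (k - 2)))‖
      ≤ ‖d α k‖ * ((k : ℝ) + 1) ^ 2 * r ^ k * (r⁻¹ * r⁻¹) := by
  rw [norm_mul, norm_mul, norm_mul, norm_pow, Complex.norm_natCast]
  have e1 : ‖y‖ ^ (k-2) ≤ r ^ k * (r⁻¹ * r⁻¹) := by
    calc ‖y‖ ^ (k-2) ≤ r ^ (k-2) := pow_le_pow_left₀ (norm_nonneg y) hy _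
      _ ≤ r ^ k * (r⁻¹ * r⁻¹) := by
          have := pow_nat_sub_le h0 h1 k 2
          calc r ^ (k-2) ≤ r ^ k * (r⁻¹)^2 := this
            _ = r ^ k * (r⁻¹ * r⁻¹) := by ring
  have e2 : (k:ℝ) ≤ (k:ℝ) + 1 := by linarith
  have e3 : ‖(k:ℂ) - 1‖ ≤ (k:ℝ) + 1 := by simpa using norm_sub_le (k:ℂ) 1
  calc ‖d α k‖ * ((k:ℝ) * (‖(k:ℂ) - 1‖ * ‖y‖ ^ (k-2)))
      ≤ ‖d α k‖ * (((k:ℝ)+1) * (((k:ℝ)+1) * (r ^ k * (r⁻¹ * r⁻¹)))) := by gcongr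
    _ = ‖d α k‖ * ((k : ℝ) + 1) ^ 2 * r ^ k * (r⁻¹ * r⁻¹) := by ring

omit hα in
lemma bF {r : ℝ} (h0 : 0 < r) (h1 : r ≤ 1) {y : ℂ} (hy : ‖y‖ ≤ r) (k : ℕ) :
    ‖d α k * ((k : ℂ) * (((k : ℂ) - 1 + (2 - 2 * α)) * y ^ (k - 1)))‖
      ≤ ‖d α k‖ * ((k : ℝ) + 1) ^ 2 * r ^ k * ((1 + ‖2 - 2 * α‖) * r⁻¹) := by
  rw [norm_mul, norm_mul, norm_mul, norm_pow, Complex.norm_natCast]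
  have e1 : ‖y‖ ^ (k-1) ≤ r ^ k * r⁻¹ := by
    calc ‖y‖ ^ (k-1) ≤ r ^ (k-1) := pow_le_pow_left₀ (norm_nonneg y) hy _
      _ ≤ r ^ k * r⁻¹ := by simpa using pow_nat_sub_le h0 h1 k 1
  have e2 : (k:ℝ) ≤ (k:ℝ) + 1 := by linarith
  have e3 : ‖(k:ℂ) - 1 + (2 - 2*α)‖ ≤ ((k:ℝ) + 1) * (1 + ‖2 - 2*α‖) := by
    have h4 : ‖(k:ℂ) - 1 + (2 - 2*α)‖ ≤ ‖(k:ℂ) - 1‖ + ‖2 - 2*α‖ := norm_add_le _ _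
    have h5 : ‖(k:ℂ) - 1‖ ≤ (k:ℝ) + 1 := by simpa using norm_sub_le (k:ℂ) 1
    have h6 : (0:ℝ) ≤ k := Nat.cast_nonneg k
    nlinarith [norm_nonneg (2 - 2*α)]
  calc ‖d α k‖ * ((k:ℝ) * (‖(k:ℂ) - 1 + (2 - 2*α)‖ * ‖y‖ ^ (k-1)))
      ≤ ‖d α k‖ * (((k:ℝ)+1) * ((((k:ℝ)+1) * (1 + ‖2 - 2*α‖)) * (r ^ k * r⁻¹))) := by gcongr
    _ = ‖d α k‖ * ((k : ℝ) + 1) ^ 2 * r ^ k * ((1 + ‖2 - 2 * α‖) * r⁻¹) := by ring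

lemma hasDerivAt_g (z : ℂ) (hz : ‖z‖ < 1) : HasDerivAt (g α) (g1 α z) z := by
  set r : ℝ := (‖z‖ + 1) / 2 with hr
  have h0 : 0 < r := by positivity
  have h1 : r < 1 := by rw [hr]; linarith
  have hzr : ‖z‖ < r := by rw [hr]; linarith
  have hmaster := summable_master hα r h0 h1
  have := hasDerivAt_tsum_of_isPreconnected (hmaster.mul_right r⁻¹)
    (Metric.isOpen_ball (x := (0:ℂ)) (ε := r)) ((convex_ball (0:ℂ) r).isPreconnected)
    (g := fun (k : ℕ) (w : ℂ) => d α k * w ^ k)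
    (g' := fun (k : ℕ) (w : ℂ) => d α k * ((k : ℂ) * w ^ (k - 1)))
    (fun k y _ => (hasDerivAt_pow k y).const_mul (d α k))
    (fun k y hyy => bT1 h0 h1.le (le_of_lt (mem_ball_zero_iff.mp hyy)) k)
    (Metric.mem_ball_self h0)
    (summable_of_ne_finset_zero (s := {0}) (by
      intro b hb
      simp only [Finset.mem_singleton] at hb
      simp [zero_pow hb]))
    (mem_ball_zero_iff.mpr hzr)
  exact this

lemma hasDerivAt_g1 (z : ℂ) (hz : ‖z‖ < 1) : HasDerivAt (g1 α) (g2 α z) z := by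
  set r : ℝ := (‖z‖ + 1) / 2 with hr
  have h0 : 0 < r := by positivity
  have h1 : r < 1 := by rw [hr]; linarith
  have hzr : ‖z‖ < r := by rw [hr]; linarith
  have hmaster := summable_master hα r h0 h1
  have hterm : ∀ (k : ℕ) (y : ℂ),
      HasDerivAt (fun w : ℂ => d α k * ((k : ℂ) * w ^ (k - 1)))
        (d α k * ((k : ℂ) * (((k : ℂ) - 1) * y ^ (k - 2)))) y := by
    intro k y
    match k with
    | 0 =>
      simp only [Nat.cast_zero, zero_mul, mul_zero]
      exact hasDerivAt_const y 0
    | (m+1) =>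
      have h := (hasDerivAt_pow m y).const_mul (d α (m+1) * ((m:ℂ) + 1))
      have hidx : m + 1 - 2 = m - 1 := by omega
      convert h using 1
      · rfl
      · rfl
      · funext w
        simp only [Nat.add_sub_cancel]
        push_cast
        ring
      · rw [hidx]
        push_cast
        ring
  have := hasDerivAt_tsum_of_isPreconnected (hmaster.mul_right (r⁻¹ * r⁻¹))
    (Metric.isOpen_ball (x := (0:ℂ)) (ε := r)) ((convex_ball (0:ℂ) r).isPreconnected)
    (g := fun (k : ℕ) (w : ℂ) => d α k * ((k : ℂ) * w ^ (k - 1)))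
    (g' := fun (k : ℕ) (w : ℂ) => d α k * ((k : ℂ) * (((k : ℂ) - 1) * w ^ (k - 2))))
    (fun k y _ => hterm k y)
    (fun k y hyy => bT2 h0 h1.le (le_of_lt (mem_ball_zero_iff.mp hyy)) k)
    (Metric.mem_ball_self h0)
    (summable_of_ne_finset_zero (s := {0, 1}) (by
      intro b hb
      simp only [Finset.mem_insert, Finset.mem_singleton] at hb
      push_neg at hb
      have : b - 1 ≠ 0 := by omega
      simp [zero_pow this]))
    (mem_ball_zero_iff.mpr hzr)
  exact this

lemma ode (z : ℂ) (hz0 : z ≠ 0) (hz1 : ‖z‖ < 1) :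
    z * (1 - z) * g2 α z + ((2 - 2 * α) - (3 - 2 * α) * z) * g1 α z
      - (1 - α) ^ 2 * g α z = 0 := by
  have h0 : 0 < ‖z‖ := norm_pos_iff.2 hz0
  have hmaster := summable_master hα ‖z‖ h0 hz1
  have S0 : Summable (fun k : ℕ => d α k * z ^ k) :=
    Summable.of_norm_bounded (hmaster.mul_right 1) (fun k => bT0 h0 hz1.le le_rfl k)
  have S1 : Summable (fun k : ℕ => d α k * ((k : ℂ) * z ^ (k - 1))) :=
    Summable.of_norm_bounded (hmaster.mul_right _) (fun k => bT1 h0 hz1.le le_rfl k)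
  have S2 : Summable (fun k : ℕ => d α k * ((k : ℂ) * (((k : ℂ) - 1) * z ^ (k - 2)))) :=
    Summable.of_norm_bounded (hmaster.mul_right _) (fun k => bT2 h0 hz1.le le_rfl k)
  set F : ℕ → ℂ := fun k => d α k * ((k : ℂ) * (((k : ℂ) - 1 + (2 - 2 * α)) * z ^ (k - 1)))
    with hF
  have SF : Summable F :=
    Summable.of_norm_bounded (hmaster.mul_right _) (fun k => bF h0 hz1.le le_rfl k)
  have hFs : ∀ k : ℕ, F (k + 1) = d α k * (((1 - α) + (k : ℂ)) * ((1 - α) + (k : ℂ))) * z ^ k := by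
    intro k
    have hrec := d_rec hα k
    show d α (k+1) * (((k+1 : ℕ) : ℂ) * ((((k+1 : ℕ) : ℂ) - 1 + (2 - 2 * α)) * z ^ (k + 1 - 1)))
      = _
    simp only [Nat.add_sub_cancel]
    push_cast
    linear_combination z ^ k * hrec
  have hEk : ∀ k : ℕ,
      z * (1 - z) * (d α k * ((k : ℂ) * (((k : ℂ) - 1) * z ^ (k - 2))))
        + ((2 - 2 * α) - (3 - 2 * α) * z) * (d α k * ((k : ℂ) * z ^ (k - 1)))
        - (1 - α) ^ 2 * (d α k * z ^ k)
      = F k - F (k + 1) := by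
    intro k
    rw [hFs k]
    simp only [hF]
    match k with
    | 0 => push_cast; ring
    | 1 => push_cast; ring
    | (m+2) =>
      rw [show m + 2 - 1 = m + 1 from rfl, show m + 2 - 2 = m from rfl]
      push_cast
      ring
  have key : z * (1 - z) * g2 α z + ((2 - 2 * α) - (3 - 2 * α) * z) * g1 α z
      - (1 - α) ^ 2 * g α z = ∑' k : ℕ, (F k - F (k + 1)) := by
    simp only [g, g1, g2]
    rw [← tsum_mul_left, ← tsum_mul_left, ← tsum_mul_left,
      ← Summable.tsum_add (S2.mul_left _) (S1.mul_left _),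
      ← Summable.tsum_sub ((S2.mul_left _).add (S1.mul_left _)) (S0.mul_left _)]
    exact tsum_congr hEk
  rw [key]
  have hE : Summable (fun k => F k - F (k + 1)) := SF.sub ((summable_nat_add_iff 1).mpr SF)
  have htend := hE.hasSum.tendsto_sum_nat
  have hps : ∀ n, ∑ i ∈ Finset.range n, (F i - F (i + 1)) = F 0 - F n :=
    fun n => Finset.sum_range_sub' F n
  have hF0 : F 0 = 0 := by simp [hF]
  have hlim : Tendsto (fun n : ℕ => F 0 - F n) atTop (𝓝 0) := by
    simpa [hF0] using (tendsto_const_nhds (x := F 0)).sub SF.tendsto_atTop_zero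
  have h2 : Tendsto (fun n : ℕ => ∑ i ∈ Finset.range n, (F i - F (i + 1))) atTop (𝓝 0) :=
    hlim.congr (fun n => (hps n).symm)
  exact tendsto_nhds_unique htend h2


omit hα in
lemma aux_facts {s : ℂ} (hs : s.re < 0) :
    (1 - s) ≠ 0 ∧ (1 - s) ∈ Complex.slitPlane ∧ ‖(1 - s)⁻¹‖ < 1 ∧ (1 - s)⁻¹ ≠ 0 := by
  have hre : 1 < (1 - s).re := by simp [Complex.sub_re]; linarith
  have hne : (1 - s) ≠ 0 := by
    intro h; rw [h] at hre; simp at hre; linarith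
  have hnorm : 1 < ‖1 - s‖ := by
    calc (1:ℝ) < (1 - s).re := hre
      _ ≤ |(1 - s).re| := le_abs_self _
      _ ≤ ‖1 - s‖ := by exact Complex.abs_re_le_norm _
  refine ⟨hne, Complex.mem_slitPlane_iff.mpr (Or.inl (by linarith)), ?_, inv_ne_zero hne⟩
  rw [norm_inv]
  rw [inv_lt_one_iff₀]
  right; exact hnorm

lemma hasDerivAt_U {s : ℂ} (hs : s.re < 0) :
    HasDerivAt (fun s : ℂ => (1 - s) ^ (α - 1) * g α ((1 - s)⁻¹))
      ((1 - α) * ((1 - s) ^ (α - 2) * g α ((1 - s)⁻¹))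
        + (1 - s) ^ (α - 1) * (g1 α ((1 - s)⁻¹) * ((1 - s)⁻¹) ^ 2)) s := by
  obtain ⟨hne, hslit, hwlt, hwne⟩ := aux_facts hs
  have hone : HasDerivAt (fun s : ℂ => 1 - s) (-1) s := by
    simpa using (hasDerivAt_id s).const_sub 1
  have hP : HasDerivAt (fun s : ℂ => (1 - s) ^ (α - 1))
      ((α - 1) * (1 - s) ^ (α - 1 - 1) * (-1)) s := hone.cpow_const hslit
  have hinv : HasDerivAt (fun s : ℂ => (1 - s)⁻¹) (-(-1) / (1 - s) ^ 2) s := hone.inv hne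
  have hgd : HasDerivAt (g α) (g1 α ((1 - s)⁻¹)) ((1 - s)⁻¹) := hasDerivAt_g hα _ hwlt
  have hcomp : HasDerivAt (fun s : ℂ => g α ((1 - s)⁻¹))
      (g1 α ((1 - s)⁻¹) * (-(-1) / (1 - s) ^ 2)) s := by
    simpa [Function.comp_def] using hgd.comp s hinv
  have hsq : (- -1 : ℂ) / (1 - s) ^ 2 = ((1 - s)⁻¹) ^ 2 := by
    rw [neg_neg, one_div, ← inv_pow]
  rw [hsq] at hcomp
  have htot := hP.mul hcomp
  convert htot using 1
  · rfl
  · rfl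
  · rfl
  rw [show α - 1 - 1 = α - 2 from by ring]
  ring

lemma hasDerivAt_U1 {s : ℂ} (hs : s.re < 0) :
    HasDerivAt (fun s : ℂ => (1 - α) * ((1 - s) ^ (α - 2) * g α ((1 - s)⁻¹))
        + (1 - s) ^ (α - 1) * (g1 α ((1 - s)⁻¹) * ((1 - s)⁻¹) ^ 2))
      ((1 - α) * ((2 - α) * ((1 - s) ^ (α - 3) * g α ((1 - s)⁻¹))
          + (1 - s) ^ (α - 2) * (g1 α ((1 - s)⁻¹) * ((1 - s)⁻¹) ^ 2))
        + ((1 - α) * ((1 - s) ^ (α - 2) * (g1 α ((1 - s)⁻¹) * ((1 - s)⁻¹) ^ 2))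
          + (1 - s) ^ (α - 1) * ((g2 α ((1 - s)⁻¹) * ((1 - s)⁻¹) ^ 2
              + g1 α ((1 - s)⁻¹) * (2 * (1 - s)⁻¹)) * ((1 - s)⁻¹) ^ 2))) s := by
  obtain ⟨hne, hslit, hwlt, hwne⟩ := aux_facts hs
  have hone : HasDerivAt (fun s : ℂ => 1 - s) (-1) s := by
    simpa using (hasDerivAt_id s).const_sub 1
  have hP1 : HasDerivAt (fun s : ℂ => (1 - s) ^ (α - 1))
      ((α - 1) * (1 - s) ^ (α - 1 - 1) * (-1)) s := hone.cpow_const hslit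
  have hP2 : HasDerivAt (fun s : ℂ => (1 - s) ^ (α - 2))
      ((α - 2) * (1 - s) ^ (α - 2 - 1) * (-1)) s := hone.cpow_const hslit
  have hinv : HasDerivAt (fun s : ℂ => (1 - s)⁻¹) (-(-1) / (1 - s) ^ 2) s := hone.inv hne
  have hgd : HasDerivAt (g α) (g1 α ((1 - s)⁻¹)) ((1 - s)⁻¹) := hasDerivAt_g hα _ hwlt
  have hcomp : HasDerivAt (fun s : ℂ => g α ((1 - s)⁻¹))
      (g1 α ((1 - s)⁻¹) * (-(-1) / (1 - s) ^ 2)) s := by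
    simpa [Function.comp_def] using hgd.comp s hinv
  have hH : HasDerivAt (fun z : ℂ => g1 α z * z ^ 2)
      (g2 α ((1 - s)⁻¹) * ((1 - s)⁻¹) ^ 2
        + g1 α ((1 - s)⁻¹) * ((2 : ℕ) * ((1 - s)⁻¹) ^ 1)) ((1 - s)⁻¹) :=
    (hasDerivAt_g1 hα _ hwlt).mul (hasDerivAt_pow 2 _)
  have hsq : (- -1 : ℂ) / (1 - s) ^ 2 = ((1 - s)⁻¹) ^ 2 := by
    rw [neg_neg, one_div, ← inv_pow]
  rw [hsq] at hcomp
  have hcomp2 : HasDerivAt (fun s : ℂ => g1 α ((1 - s)⁻¹) * ((1 - s)⁻¹) ^ 2)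
      ((g2 α ((1 - s)⁻¹) * ((1 - s)⁻¹) ^ 2
        + g1 α ((1 - s)⁻¹) * (2 * (1 - s)⁻¹)) * ((1 - s)⁻¹) ^ 2) s := by
    have h := hH.comp s hinv
    simp only [Function.comp_def] at h
    convert h using 1
    · rfl
    · rfl
    rw [hsq]
    push_cast
    ring
  have htot := ((hP2.mul hcomp).const_mul (1 - α)).add (hP1.mul hcomp2)
  convert htot using 1
  · rfl
  · rfl
  · rfl
  rw [show α - 1 - 1 = α - 2 from by ring, show α - 2 - 1 = α - 3 from by ring]
  push_cast
  ring


end Stmt11Aux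

open Stmt11Aux

/-- for α ∈ ℂ with 2−2α not a nonpositive integer and every real t < 0,
u(t) := (1−t)^{α−1}·F(1−α,1−α;2−2α;1/(1−t)) satisfies t(1−t)u'' + (1−2t)u' + α(α−1)u = 0. -/
theorem stmt_11 (α : ℂ) (hα : ∀ m : ℕ, 2 - 2 * α ≠ -(m : ℂ)) (u : ℝ → ℂ)
    (hu : ∀ t : ℝ, u t =
      ((1 - t : ℝ) : ℂ) ^ (α - 1) * hypF (1 - α) (1 - α) (2 - 2 * α) (1 / (1 - t))) :
    ∀ t : ℝ, t < 0 →
      (t : ℂ) * (1 - (t : ℂ)) * deriv (deriv u) t + (1 - 2 * (t : ℂ)) * deriv u t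
        + α * (α - 1) * u t = 0 := by
  intro t ht
  have hsre : ((t : ℂ)).re < 0 := by simpa using ht
  have hu' : u = fun t' : ℝ => (1 - (t' : ℂ)) ^ (α - 1) * g α ((1 - (t' : ℂ))⁻¹) := by
    funext t'
    rw [hu t']
    have hb : ((1 - t' : ℝ) : ℂ) = 1 - (t' : ℂ) := by push_cast; ring
    have hx : ((1 / (1 - t') : ℝ) : ℂ) = (1 - (t' : ℂ))⁻¹ := by push_cast; ring
    rw [hb]
    congr 1
    unfold hypF Stmt11Aux.g Stmt11Aux.d
    rw [hx]
  have hd1 : ∀ x : ℝ, x < 0 → HasDerivAt u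
      ((1 - α) * ((1 - (x : ℂ)) ^ (α - 2) * g α ((1 - (x : ℂ))⁻¹))
        + (1 - (x : ℂ)) ^ (α - 1) * (g1 α ((1 - (x : ℂ))⁻¹) * ((1 - (x : ℂ))⁻¹) ^ 2)) x := by
    intro x hx
    have h := (hasDerivAt_U hα (s := (x : ℂ)) (by simpa using hx)).comp_ofReal
    rw [hu']
    exact h
  have hder1 : deriv u t
      = (1 - α) * ((1 - (t : ℂ)) ^ (α - 2) * g α ((1 - (t : ℂ))⁻¹))
        + (1 - (t : ℂ)) ^ (α - 1) * (g1 α ((1 - (t : ℂ))⁻¹) * ((1 - (t : ℂ))⁻¹) ^ 2) :=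
    (hd1 t ht).deriv
  have hev : deriv u =ᶠ[𝓝 t] fun x : ℝ =>
      ((1 - α) * ((1 - (x : ℂ)) ^ (α - 2) * g α ((1 - (x : ℂ))⁻¹))
        + (1 - (x : ℂ)) ^ (α - 1) * (g1 α ((1 - (x : ℂ))⁻¹) * ((1 - (x : ℂ))⁻¹) ^ 2)) := by
    filter_upwards [Iio_mem_nhds ht] with x hx
    exact (hd1 x hx).deriv
  have hder2 : deriv (deriv u) t
      = (1 - α) * ((2 - α) * ((1 - (t : ℂ)) ^ (α - 3) * g α ((1 - (t : ℂ))⁻¹))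
          + (1 - (t : ℂ)) ^ (α - 2) * (g1 α ((1 - (t : ℂ))⁻¹) * ((1 - (t : ℂ))⁻¹) ^ 2))
        + ((1 - α) * ((1 - (t : ℂ)) ^ (α - 2) * (g1 α ((1 - (t : ℂ))⁻¹) * ((1 - (t : ℂ))⁻¹) ^ 2))
          + (1 - (t : ℂ)) ^ (α - 1) * ((g2 α ((1 - (t : ℂ))⁻¹) * ((1 - (t : ℂ))⁻¹) ^ 2
              + g1 α ((1 - (t : ℂ))⁻¹) * (2 * (1 - (t : ℂ))⁻¹)) * ((1 - (t : ℂ))⁻¹) ^ 2)) := by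
    rw [hev.deriv_eq]
    exact ((hasDerivAt_U1 hα hsre).comp_ofReal).deriv
  have hut : u t = (1 - (t : ℂ)) ^ (α - 1) * g α ((1 - (t : ℂ))⁻¹) := by rw [hu']
  rw [hder2, hder1, hut]
  obtain ⟨hvne, -, hwlt, hwne⟩ := aux_facts hsre
  have hODE := ode hα (1 - (t : ℂ))⁻¹ hwne hwlt
  set v : ℂ := 1 - (t : ℂ) with hv
  have ht' : (t : ℂ) = 1 - v := by rw [hv]; ring
  clear_value v
  have e2 : v ^ (α - 2) = v ^ (α - 1) * v⁻¹ := by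
    rw [show α - 2 = (α - 1) - 1 from by ring, Complex.cpow_sub _ _ hvne, Complex.cpow_one,
      div_eq_mul_inv]
  have e3 : v ^ (α - 3) = v ^ (α - 1) * v⁻¹ * v⁻¹ := by
    rw [show α - 3 = (α - 2) - 1 from by ring, Complex.cpow_sub _ _ hvne, Complex.cpow_one,
      div_eq_mul_inv, e2]
  rw [e2, e3, ht']
  generalize v ^ (α - 1) = P
  generalize hw' : v⁻¹ = w at hODE ⊢
  have hw : v * w = 1 := by rw [← hw']; exact mul_inv_cancel₀ hvne
  linear_combination (-(P) * w) * hODE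
    + (P*(g α w)*α - P*(g α w)*α^2 - 2*w*P*(g1 α w) + 2*w*P*(g1 α w)*α + 2*w*P*(g α w)
      - 3*w*P*(g α w)*α + w*P*(g α w)*α^2 - w^2*P*(g2 α w) + 4*w^2*P*(g1 α w)
      - 2*w^2*P*(g1 α w)*α + w^3*P*(g2 α w) - 2*v*w*P*(g α w) + 3*v*w*P*(g α w)*α
      - v*w*P*(g α w)*α^2 - 4*v*w^2*P*(g1 α w) + 2*v*w^2*P*(g1 α w)*α
      - v*w^3*P*(g2 α w)) * hw
end

section
/- Let κ < 0 and α ∈ ℂ. Then the function w(s) := (cosh(√(−κ)·s/2))^{−2α}·F(α, α; 1; tanh²(√(−κ)·s/2)) satisfies −w''(s) − √(−κ)·coth(√(−κ)·s)·w'(s) = κ·α(α−1)·w(s) for every s > 0. -/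
open FormalMultilinearSeries

namespace Stmt15

/-- coefficients of F(α,α;1;·) -/
noncomputable def hc (α : ℂ) (k : ℕ) : ℂ :=
  (ascPochhammer ℂ k).eval α * (ascPochhammer ℂ k).eval α /
    ((ascPochhammer ℂ k).eval 1 * (Nat.factorial k : ℂ))

lemma hc_succ (α : ℂ) (k : ℕ) :
    hc α (k + 1) = hc α k * ((α + k) ^ 2 / ((k : ℂ) + 1) ^ 2) := by
  have hk : ((Nat.factorial k : ℂ)) ≠ 0 :=
    Nat.cast_ne_zero.mpr (Nat.factorial_ne_zero k)
  have hk1 : ((k : ℂ) + 1) ≠ 0 := Nat.cast_add_one_ne_zero k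
  simp only [hc, ascPochhammer_succ_eval, ascPochhammer_eval_one, Nat.factorial_succ]
  push_cast
  rw [div_mul_div_comm, div_eq_div_iff (by
    exact mul_ne_zero (mul_ne_zero hk (by intro h; exact hk1 (by linear_combination h)))
      (mul_ne_zero hk1 hk)) (mul_ne_zero (mul_ne_zero hk hk) (pow_ne_zero 2 hk1))]
  ring

lemma hc_rec (α : ℂ) (k : ℕ) :
    ((k : ℂ) + 1) ^ 2 * hc α (k + 1) = (α + k) ^ 2 * hc α k := by
  have hk1 : ((k : ℂ) + 1) ≠ 0 := Nat.cast_add_one_ne_zero k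
  rw [hc_succ]
  field_simp

noncomputable def pF (α : ℂ) : FormalMultilinearSeries ℂ ℂ ℂ :=
  FormalMultilinearSeries.ofScalars ℂ (hc α)

noncomputable def Fc (α : ℂ) : ℂ → ℂ := (pF α).sum

lemma radius_ge (α : ℂ) : 1 ≤ (pF α).radius := by
  refine ENNReal.le_of_forall_nnreal_lt (fun r hr => ?_)
  have hr1 : (r : ℝ) < 1 := by exact_mod_cast hr
  apply FormalMultilinearSeries.le_radius_of_summable_norm
  simp only [pF, FormalMultilinearSeries.ofScalars_norm]
  have hr0 : (0:ℝ) ≤ r := r.coe_nonneg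
  set l : ℝ := (1 + r) / 2 with hl
  have hl1 : l < 1 := by rw [hl]; linarith
  apply summable_of_ratio_norm_eventually_le hl1
  have htend : Filter.Tendsto (fun n : ℕ => ((‖α‖ + n) / (n + 1)) ^ 2 * r)
      Filter.atTop (nhds ((1:ℝ)^2 * r)) := by
    apply Filter.Tendsto.mul_const
    apply Filter.Tendsto.pow
    have h1 : Filter.Tendsto (fun n : ℕ => (‖α‖ - 1) / (n + 1) + 1) Filter.atTop
        (nhds (0 + 1)) := by
      apply Filter.Tendsto.add_const
      apply Filter.Tendsto.div_atTop tendsto_const_nhds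
      exact Filter.tendsto_atTop_add_const_right _ 1 tendsto_natCast_atTop_atTop
    simp only [zero_add] at h1
    convert h1 using 2 with n
    have : (n : ℝ) + 1 ≠ 0 := by positivity
    field_simp
    ring
  have hev : ∀ᶠ n : ℕ in Filter.atTop, ((‖α‖ + n) / (n + 1)) ^ 2 * r ≤ l := by
    apply Filter.Tendsto.eventually_le_const _ htend
    rw [one_pow, one_mul, hl]; linarith
  filter_upwards [hev] with n hn
  have hrec : ‖hc α (n+1)‖ ≤ ((‖α‖ + n)/(n+1))^2 * ‖hc α n‖ := by
    rw [hc_succ, norm_mul, norm_div, norm_pow, norm_pow]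
    have h1 : ‖α + (n:ℂ)‖ ≤ ‖α‖ + n := by
      calc ‖α + (n:ℂ)‖ ≤ ‖α‖ + ‖(n:ℂ)‖ := norm_add_le _ _
      _ = ‖α‖ + n := by simp
    have h2 : ‖((n:ℂ) + 1)‖ = (n:ℝ) + 1 := by
      rw [show ((n:ℂ) + 1) = ((n+1 : ℕ) : ℂ) by push_cast; ring, Complex.norm_natCast]
      push_cast; ring
    rw [h2, mul_comm]
    apply mul_le_mul_of_nonneg_right _ (norm_nonneg _)
    rw [div_pow]
    gcongr <;> first | positivity | exact h1
  have hnn : (0:ℝ) ≤ (n:ℝ) + 1 := by positivity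
  calc ‖‖hc α (n+1)‖ * (r:ℝ) ^ (n+1)‖ = ‖hc α (n+1)‖ * (r:ℝ)^(n+1) := by
        rw [Real.norm_of_nonneg (by positivity)]
    _ ≤ (((‖α‖ + n)/(n+1))^2 * ‖hc α n‖) * (r:ℝ)^(n+1) := by gcongr
    _ = (((‖α‖ + n)/(n+1))^2 * r) * (‖hc α n‖ * (r:ℝ)^n) := by ring
    _ ≤ l * (‖hc α n‖ * (r:ℝ)^n) := by
        apply mul_le_mul_of_nonneg_right hn (by positivity)
    _ = l * ‖‖hc α n‖ * (r:ℝ)^n‖ := by rw [Real.norm_of_nonneg (by positivity)]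

lemma hFc (α : ℂ) : HasFPowerSeriesOnBall (Fc α) (pF α) 0 1 :=
  ((pF α).hasFPowerSeriesOnBall (lt_of_lt_of_le one_pos (radius_ge α))).mono one_pos (radius_ge α)

lemma memball {y : ℂ} (h : ‖y‖ < 1) : y ∈ Metric.eball (0:ℂ) 1 := by
  rw [Metric.mem_eball, edist_dist, dist_zero_right]
  exact ENNReal.ofReal_lt_one.mpr h

lemma hypF_eq (α : ℂ) (x : ℝ) : hypF α α 1 x = Fc α x := by
  rw [Fc, FormalMultilinearSeries.sum, hypF]
  apply tsum_congr
  intro k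
  rw [pF, FormalMultilinearSeries.ofScalars_apply_eq, smul_eq_mul, hc]


variable {α : ℂ}

lemma hasSum0 {y : ℂ} (h : ‖y‖ < 1) :
    HasSum (fun n : ℕ => hc α n * y ^ n) (Fc α y) := by
  have := (hFc α).hasSum (memball h)
  rw [zero_add] at this
  simpa only [pF, FormalMultilinearSeries.ofScalars_apply_eq, smul_eq_mul] using this

lemma fderiv_apply_self (f : ℂ → ℂ) (y : ℂ) : fderiv ℂ f y y = y * deriv f y := by
  have : y = y • (1:ℂ) := by simp
  rw [this, map_smul, smul_eq_mul, smul_eq_mul, mul_one, fderiv_apply_one_eq_deriv]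

lemma hasSum1 {y : ℂ} (h : ‖y‖ < 1) (h0 : y ≠ 0) :
    HasSum (fun n : ℕ => ((n : ℂ) + 1) * hc α (n + 1) * y ^ n) (deriv (Fc α) y) := by
  have hd := (hFc α).fderiv.hasSum (memball h)
  rw [zero_add] at hd
  have hd2 := hd.mapL (ContinuousLinearMap.apply ℂ ℂ y)
  simp only [ContinuousLinearMap.apply_apply] at hd2
  have hterm : ∀ n : ℕ, ((pF α).derivSeries n fun _ => y) y
      = y * (((n : ℂ) + 1) * hc α (n + 1) * y ^ n) := by
    intro n
    rw [FormalMultilinearSeries.derivSeries_apply_diag]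
    simp only [pF, FormalMultilinearSeries.ofScalars_apply_eq, nsmul_eq_mul, smul_eq_mul]
    push_cast
    ring
  rw [funext hterm, fderiv_apply_self] at hd2
  have h5 := hd2.mul_left y⁻¹
  have e1 : (fun n : ℕ => y⁻¹ * (y * (((n:ℂ)+1) * hc α (n+1) * y^n)))
      = (fun n : ℕ => ((n:ℂ)+1) * hc α (n+1) * y^n) := by
    funext n; field_simp
  have e2 : y⁻¹ * (y * deriv (Fc α) y) = deriv (Fc α) y := by field_simp
  rw [e1, e2] at h5; exact h5

lemma hasSum2 {y : ℂ} (h : ‖y‖ < 1) (h0 : y ≠ 0) :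
    HasSum (fun n : ℕ => ((n : ℂ) + 1) * ((n : ℂ) + 2) * hc α (n + 2) * y ^ n)
      (deriv (deriv (Fc α)) y) := by
  have hball : y ∈ Metric.eball (0:ℂ) 1 := memball h
  have hd := (hFc α).fderiv.fderiv.hasSum hball
  rw [zero_add] at hd
  have hd2 := (hd.mapL (ContinuousLinearMap.apply ℂ (ℂ →L[ℂ] ℂ) y)).mapL
    (ContinuousLinearMap.apply ℂ ℂ y)
  simp only [ContinuousLinearMap.apply_apply] at hd2
  -- identify the sum value
  have hΦdiff : DifferentiableAt ℂ (fderiv ℂ (Fc α)) y :=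
    ((hFc α).fderiv.analyticAt_of_mem hball).differentiableAt
  have hkey : fderiv ℂ (fderiv ℂ (Fc α)) y y y = y * (y * deriv (deriv (Fc α)) y) := by
    have e1 : fderiv ℂ (fderiv ℂ (Fc α)) y y = y • (fderiv ℂ (fderiv ℂ (Fc α)) y) 1 := by
      rw [show y = y • (1:ℂ) by simp, map_smul]; simp
    rw [e1]
    have e2 : (fderiv ℂ (fderiv ℂ (Fc α)) y 1) y = y * (fderiv ℂ (fderiv ℂ (Fc α)) y 1) 1 := by
      conv_lhs => rw [show y = y • (1:ℂ) by simp, map_smul]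
      simp
    simp only [ContinuousLinearMap.smul_apply, smul_eq_mul, e2]
    congr 1
    congr 1
    -- fderiv Φ y 1 1 = deriv (deriv F) y
    have hder : deriv (Fc α) = fun z => (ContinuousLinearMap.apply ℂ ℂ 1) (fderiv ℂ (Fc α) z) := by
      funext z
      simp [ContinuousLinearMap.apply_apply, fderiv_apply_one_eq_deriv]
    have hfd : fderiv ℂ (deriv (Fc α)) y
        = (ContinuousLinearMap.apply ℂ ℂ 1).comp (fderiv ℂ (fderiv ℂ (Fc α)) y) := by
      rw [hder]
      exact ((ContinuousLinearMap.apply ℂ ℂ 1).hasFDerivAt.comp y hΦdiff.hasFDerivAt).fderiv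
    rw [← fderiv_apply_one_eq_deriv, hfd]
    simp
  have hterm : ∀ n : ℕ, ((pF α).derivSeries.derivSeries n fun _ => y) y y
      = y * (y * (((n : ℂ) + 1) * ((n : ℂ) + 2) * hc α (n + 2) * y ^ n)) := by
    intro n
    rw [FormalMultilinearSeries.derivSeries_apply_diag]
    simp only [ContinuousLinearMap.smul_apply]
    rw [FormalMultilinearSeries.derivSeries_apply_diag]
    simp only [pF, FormalMultilinearSeries.ofScalars_apply_eq, nsmul_eq_mul, smul_eq_mul]
    push_cast
    ring
  rw [funext hterm, hkey] at hd2
  have h5 := hd2.mul_left (y⁻¹ * y⁻¹)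
  have e1 : (fun n : ℕ => (y⁻¹*y⁻¹) * (y * (y * (((n:ℂ)+1) * ((n:ℂ)+2) * hc α (n+2) * y^n))))
      = (fun n : ℕ => ((n:ℂ)+1) * ((n:ℂ)+2) * hc α (n+2) * y^n) := by
    funext n; field_simp
  have e2 : (y⁻¹*y⁻¹) * (y * (y * deriv (deriv (Fc α)) y)) = deriv (deriv (Fc α)) y := by
    field_simp
  rw [e1, e2] at h5; exact h5

lemma ode {y : ℂ} (h : ‖y‖ < 1) (h0 : y ≠ 0) :
    y * (1 - y) * deriv (deriv (Fc α)) y + (1 - (2*α+1)*y) * deriv (Fc α) y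
      - α^2 * Fc α y = 0 := by
  set H := deriv (deriv (Fc α)) y
  set G := deriv (Fc α) y
  set F := Fc α y
  have S2 : HasSum (fun n : ℕ => ((n : ℂ) + 1) * ((n : ℂ) + 2) * hc α (n + 2) * y ^ n) H :=
    hasSum2 h h0
  have S1 : HasSum (fun n : ℕ => ((n : ℂ) + 1) * hc α (n + 1) * y ^ n) G := hasSum1 h h0
  have S0 : HasSum (fun n : ℕ => hc α n * y ^ n) F := hasSum0 h
  set f1 : ℕ → ℂ := fun m => (m:ℂ) * ((m:ℂ)+1) * hc α (m+1) * y^m with hf1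
  set f2 : ℕ → ℂ := fun m => ((m:ℂ)-1) * (m:ℂ) * hc α m * y^m with hf2
  set f3 : ℕ → ℂ := fun m => (m:ℂ) * hc α m * y^m with hf3
  have A1 : HasSum f1 (y * H) := by
    have t := S2.mul_left y
    have e : (fun n : ℕ => y * (((n : ℂ) + 1) * ((n : ℂ) + 2) * hc α (n + 2) * y ^ n))
        = fun n : ℕ => f1 (n + 1) := by
      funext n; simp only [hf1]; push_cast; ring
    rw [e] at t
    have := (hasSum_nat_add_iff (f := f1) 1).mp t
    simpa [hf1] using this
  have A2 : HasSum f2 (y^2 * H) := by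
    have t := S2.mul_left (y^2)
    have e : (fun n : ℕ => y^2 * (((n : ℂ) + 1) * ((n : ℂ) + 2) * hc α (n + 2) * y ^ n))
        = fun n : ℕ => f2 (n + 2) := by
      funext n; simp only [hf2]; push_cast; ring
    rw [e] at t
    have := (hasSum_nat_add_iff (f := f2) 2).mp t
    simpa [hf2, Finset.sum_range_succ] using this
  have A3 : HasSum f3 (y * G) := by
    have t := S1.mul_left y
    have e : (fun n : ℕ => y * (((n : ℂ) + 1) * hc α (n + 1) * y ^ n))
        = fun n : ℕ => f3 (n + 1) := by
      funext n; simp only [hf3]; push_cast; ring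
    rw [e] at t
    have := (hasSum_nat_add_iff (f := f3) 1).mp t
    simpa [hf3] using this
  have combo := ((A1.sub A2).add S1).sub ((A3.mul_left (2*α+1)).add (S0.mul_left (α^2)))
  have ez : (fun n : ℕ => (f1 n - f2 n + ((n : ℂ) + 1) * hc α (n + 1) * y ^ n)
      - ((2*α+1) * f3 n + α^2 * (hc α n * y ^ n))) = fun _ => (0:ℂ) := by
    funext n
    simp only [hf1, hf2, hf3]
    linear_combination (y^n) * hc_rec α n
  rw [ez] at combo
  have hval := combo.unique hasSum_zero
  linear_combination hval

lemma dFc {y : ℂ} (h : ‖y‖ < 1) : HasDerivAt (Fc α) (deriv (Fc α) y) y :=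
  (((hFc α).analyticAt_of_mem (memball h)).differentiableAt).hasDerivAt

lemma dGc {y : ℂ} (h : ‖y‖ < 1) :
    HasDerivAt (deriv (Fc α)) (deriv (deriv (Fc α)) y) y := by
  have hA : AnalyticOnNhd ℂ (Fc α) (EMetric.ball (0:ℂ) 1) := (hFc α).analyticOnNhd
  exact ((hA.deriv y (memball h)).differentiableAt).hasDerivAt


end Stmt15

open Stmt15 in
/-- for κ < 0 and α ∈ ℂ, the function
w(s) := (cosh(√(−κ)s/2))^{−2α}·F(α,α;1;tanh²(√(−κ)s/2)) satisfies
−w''(s) − √(−κ)·coth(√(−κ)s)·w'(s) = κ·α(α−1)·w(s) for every s > 0. -/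
theorem stmt_15 (κ : ℝ) (hκ : κ < 0) (α : ℂ) (w : ℝ → ℂ)
    (hw : ∀ s : ℝ, w s = ((Real.cosh (Real.sqrt (-κ) * s / 2) : ℝ) : ℂ) ^ (-2 * α) *
      hypF α α 1 (Real.tanh (Real.sqrt (-κ) * s / 2) ^ 2)) :
    ∀ s : ℝ, 0 < s →
      -(deriv (deriv w) s)
          - (Real.sqrt (-κ) : ℂ) *
            ((Real.cosh (Real.sqrt (-κ) * s) / Real.sinh (Real.sqrt (-κ) * s) : ℝ) : ℂ) *
            deriv w s
        = (κ : ℂ) * α * (α - 1) * w s := by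
  have hκ0 : (0:ℝ) < -κ := by linarith
  set q : ℝ := Real.sqrt (-κ) with hqdef
  have hq : 0 < q := Real.sqrt_pos.mpr hκ0
  have hq2 : q^2 = -κ := Real.sq_sqrt (le_of_lt hκ0)
  -- complex abbreviations
  set tc : ℝ → ℂ := fun s => ((Real.tanh (q * s / 2) : ℝ) : ℂ) with htcdef
  set Z : ℝ → ℂ := fun s => tc s * tc s with hZdef
  set Af : ℝ → ℂ := fun s =>
    Complex.exp ((-2*α) * ((Real.log (Real.cosh (q * s / 2)) : ℝ) : ℂ)) with hAdef
  set G : ℂ → ℂ := deriv (Fc α) with hGdef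
  set H : ℂ → ℂ := deriv G with hHdef
  have hq2c : ((q:ℂ)/2) = ((q/2 : ℝ) : ℂ) := by push_cast; ring
  -- tanh bounds
  have htsq : ∀ x : ℝ, Real.tanh x ^ 2 < 1 := by
    intro x
    rw [Real.tanh_eq_sinh_div_cosh, div_pow, div_lt_one (by positivity)]
    nlinarith [Real.cosh_sq' x, Real.cosh_pos x]
  have hball : ∀ s : ℝ, ‖Z s‖ < 1 := by
    intro s
    rw [hZdef]
    simp only [htcdef, norm_mul, Complex.norm_real, Real.norm_eq_abs]
    calc |Real.tanh (q*s/2)| * |Real.tanh (q*s/2)| = Real.tanh (q*s/2)^2 := by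
          rw [← abs_mul, ← sq, abs_sq]
    _ < 1 := htsq _
  -- basic real derivatives
  have hu : ∀ s : ℝ, HasDerivAt (fun s : ℝ => q * s / 2) (q/2) s := by
    intro s
    simpa using ((hasDerivAt_id s).const_mul q).div_const 2
  have hch : ∀ s : ℝ, HasDerivAt (fun s : ℝ => Real.cosh (q * s / 2))
      (Real.sinh (q * s / 2) * (q/2)) s :=
    fun s => (Real.hasDerivAt_cosh _).comp s (hu s)
  have hsh : ∀ s : ℝ, HasDerivAt (fun s : ℝ => Real.sinh (q * s / 2))
      (Real.cosh (q * s / 2) * (q/2)) s :=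
    fun s => (Real.hasDerivAt_sinh _).comp s (hu s)
  have hchpos : ∀ x : ℝ, 0 < Real.cosh x := Real.cosh_pos
  have hth : ∀ s : ℝ, HasDerivAt (fun s : ℝ => Real.tanh (q * s / 2))
      ((1 - Real.tanh (q * s / 2)^2) * (q/2)) s := by
    intro s
    have heq : (fun s : ℝ => Real.tanh (q * s / 2))
        = fun s : ℝ => Real.sinh (q * s / 2) / Real.cosh (q * s / 2) :=
      funext fun s => Real.tanh_eq_sinh_div_cosh _
    rw [heq]
    have hd := (hsh s).div (hch s) (ne_of_gt (hchpos _))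
    refine hd.congr_deriv ?_
    symm
    rw [Real.tanh_eq_sinh_div_cosh]
    have hpy := Real.cosh_sq_sub_sinh_sq (q*s/2)
    field_simp
  have htc : ∀ s : ℝ, HasDerivAt tc ((1 - tc s^2) * ((q:ℂ)/2)) s := by
    intro s
    have := (hth s).ofReal_comp
    rw [htcdef]
    convert this using 1
    push_cast
    ring
  have hZd : ∀ s : ℝ, HasDerivAt Z (2 * tc s * (1 - tc s^2) * ((q:ℂ)/2)) s := by
    intro s
    have := (htc s).mul (htc s)
    rw [hZdef]
    refine this.congr_deriv ?_
    ring
  have hlog : ∀ s : ℝ, HasDerivAt (fun s : ℝ => Real.log (Real.cosh (q * s / 2)))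
      (Real.tanh (q * s / 2) * (q/2)) s := by
    intro s
    have := (Real.hasDerivAt_log (ne_of_gt (hchpos (q*s/2)))).comp s (hch s)
    refine this.congr_deriv ?_
    rw [Real.tanh_eq_sinh_div_cosh]
    field_simp
  have hA : ∀ s : ℝ, HasDerivAt Af (Af s * (-2*α * (tc s * ((q:ℂ)/2)))) s := by
    intro s
    have h1 := ((hlog s).ofReal_comp.const_mul (-2*α)).cexp
    rw [hAdef, htcdef]
    convert h1 using 1
    push_cast
    ring
  -- derivative of F ∘ Z and G ∘ Z
  have hFZ : ∀ s : ℝ, HasDerivAt (fun s => Fc α (Z s))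
      ((2 * tc s * (1 - tc s^2) * ((q:ℂ)/2)) * G (Z s)) s := by
    intro s
    have h1 : HasDerivAt (Fc α) (G (Z s)) (Z s) := dFc (hball s)
    have := h1.scomp s (hZd s)
    simpa [smul_eq_mul, Function.comp_def] using this
  have hGZ : ∀ s : ℝ, HasDerivAt (fun s => G (Z s))
      ((2 * tc s * (1 - tc s^2) * ((q:ℂ)/2)) * H (Z s)) s := by
    intro s
    have h1 : HasDerivAt G (H (Z s)) (Z s) := dGc (hball s)
    have := h1.scomp s (hZd s)
    simpa [smul_eq_mul, Function.comp_def] using this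
  -- rewrite w
  have wfun : w = fun s => Af s * Fc α (Z s) := by
    funext s
    rw [hw s]
    congr 1
    · rw [hAdef]
      have hpos := hchpos (q * s / 2)
      rw [Complex.cpow_def_of_ne_zero (by exact_mod_cast ne_of_gt hpos),
        ← Complex.ofReal_log (le_of_lt hpos), mul_comm]
    · rw [hypF_eq, hZdef, htcdef]
      congr 1
      push_cast
      ring
  subst wfun
  -- first derivative
  set B : ℝ → ℂ := fun s => -2*α * Fc α (Z s) + 2 * ((1 - tc s^2) * G (Z s)) with hBdef
  set W1 : ℝ → ℂ := fun s => (q:ℂ)/2 * Af s * tc s * B s with hW1def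
  have hw1 : ∀ s : ℝ, HasDerivAt (fun s => Af s * Fc α (Z s)) (W1 s) s := by
    intro s
    have := (hA s).mul (hFZ s)
    rw [hW1def, hBdef]
    refine this.congr_deriv ?_
    simp only [hGdef]
    ring
  have hd1 : deriv (fun s => Af s * Fc α (Z s)) = W1 := funext fun s => (hw1 s).deriv
  -- second derivative
  have hsq : ∀ s : ℝ, HasDerivAt (fun s : ℝ => tc s ^ 2)
      ((1 - tc s^2) * ((q:ℂ)/2) * tc s + tc s * ((1 - tc s^2) * ((q:ℂ)/2))) s := by
    intro s
    have e : (fun s : ℝ => tc s ^ 2) = fun s => tc s * tc s := by funext x; ring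
    rw [e]; exact (htc s).mul (htc s)
  have hB : ∀ s : ℝ, HasDerivAt B
      (-2*α * (2 * tc s * (1 - tc s ^ 2) * ((q:ℂ)/2) * G (Z s))
        + 2 * ((-((1 - tc s^2) * ((q:ℂ)/2) * tc s + tc s * ((1 - tc s^2) * ((q:ℂ)/2)))) * G (Z s)
          + (1 - tc s ^ 2) * (2 * tc s * (1 - tc s ^ 2) * ((q:ℂ)/2) * H (Z s)))) s := by
    intro s
    rw [hBdef]
    exact ((hFZ s).const_mul (-2*α)).add ((((hsq s).const_sub 1).mul (hGZ s)).const_mul 2)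
  have hw2 := fun s : ℝ => (((hA s).const_mul ((q:ℂ)/2)).mul (htc s)).mul (hB s)
  simp only [Pi.mul_def] at hw2
  -- now the endgame
  intro s hs
  have hus : 0 < q * s / 2 := by positivity
  have hτpos : 0 < Real.tanh (q * s / 2) := by
    rw [Real.tanh_eq_sinh_div_cosh]
    exact div_pos (by rwa [Real.sinh_pos_iff]) (hchpos _)
  have hτc0 : tc s ≠ 0 := by
    have h0 : (↑(Real.tanh (q*s/2)) : ℂ) ≠ 0 := by exact_mod_cast ne_of_gt hτpos
    exact h0
  have hZ0 : Z s ≠ 0 := mul_ne_zero hτc0 hτc0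
  have hODE := ode (α := α) (hball s) hZ0
  rw [← hGdef] at hODE
  rw [← hHdef] at hODE
  have hcoth : ((Real.cosh (q*s) / Real.sinh (q*s) : ℝ) : ℂ) = (1 + tc s^2)/(2 * tc s) := by
    have hshpos : 0 < Real.sinh (q*s/2) := by rwa [Real.sinh_pos_iff]
    have hr : Real.cosh (q*s) / Real.sinh (q*s)
        = (1 + Real.tanh (q * s / 2)^2)/(2*Real.tanh (q * s / 2)) := by
      rw [show q*s = 2*(q*s/2) by ring, Real.cosh_two_mul, Real.sinh_two_mul,
        Real.tanh_eq_sinh_div_cosh]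
      have hpy := Real.cosh_sq_sub_sinh_sq (q*s/2)
      field_simp
    rw [hr, htcdef]
    push_cast
    ring
  have hκc : (κ:ℂ) = -((q:ℂ))^2 := by
    have hk : κ = -q^2 := by linarith [hq2]
    rw [hk]; push_cast; ring
  rw [hd1, hW1def, (hw2 s).deriv, hcoth, hκc]
  rw [show ((fun s => Af s * Fc α (Z s)) s : ℂ) = Af s * Fc α (Z s) from rfl]
  rw [hBdef]
  simp only [hZdef, ← sq] at hODE ⊢
  field_simp [hτc0]
  linear_combination (-(2:ℂ) * (q:ℂ)^2 * Af s * (1 - tc s^2)) * hODE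
end

section
/- Let n, p be integers with 1 ≤ p ≤ n−1, let I ⊆ ℝ be an open interval with 0 ∉ I and 1 ∉ I, let h : I → ℝ, and let f, f̂ : I → ℝ be twice differentiable functions satisfying, for all z ∈ I, the coupled system z(1−z)f''(z) + (n/2)(1−2z)f'(z) − [ p(1/(2z(1−z)) + n−p−1) ]·f(z) = h(z) − (p(1−2z)/(2z(1−z)))·f̂(z) and z(1−z)f̂''(z) + (n/2)(1−2z)f̂'(z) − [ (n−p)(1/(2z(1−z)) + p−1) ]·f̂(z) = h(z) − ((n−p)(1−2z)/(2z(1−z)))·f(z). Define g(z) := f'(z) + p·[ (1−2z)·f(z) − f̂(z) ]/(2z(1−z)) and ĝ(z) := f̂'(z) + (n−p)·[ (1−2z)·f̂(z) − f(z) ]/(2z(1−z)). Then for all z ∈ I: z(1−z)g'(z) + (n−p)(1/2−z)·g(z) + (p/2)·ĝ(z) = h(z) and z(1−z)ĝ'(z) + p(1/2−z)·ĝ(z) + ((n−p)/2)·g(z) = h(z). -/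
/-- the differential substitution decoupling the radial system of the Hodge
Laplacian in constant curvature (case ℓ = 0) into a first-order system. -/
theorem stmt_17 (n p : ℤ) (hp : 1 ≤ p) (hpn : p ≤ n - 1)
    (a b : ℝ) (h0 : (0 : ℝ) ∉ Set.Ioo a b) (h1 : (1 : ℝ) ∉ Set.Ioo a b)
    (h f fh : ℝ → ℝ)
    (hf : ∀ z ∈ Set.Ioo a b, DifferentiableAt ℝ f z)
    (hf' : ∀ z ∈ Set.Ioo a b, DifferentiableAt ℝ (deriv f) z)
    (hfh : ∀ z ∈ Set.Ioo a b, DifferentiableAt ℝ fh z)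
    (hfh' : ∀ z ∈ Set.Ioo a b, DifferentiableAt ℝ (deriv fh) z)
    (heq1 : ∀ z ∈ Set.Ioo a b,
      z * (1 - z) * deriv (deriv f) z + ((n : ℝ) / 2) * (1 - 2 * z) * deriv f z
          - ((p : ℝ) * (1 / (2 * z * (1 - z)) + (n : ℝ) - (p : ℝ) - 1)) * f z
        = h z - ((p : ℝ) * (1 - 2 * z) / (2 * z * (1 - z))) * fh z)
    (heq2 : ∀ z ∈ Set.Ioo a b,
      z * (1 - z) * deriv (deriv fh) z + ((n : ℝ) / 2) * (1 - 2 * z) * deriv fh z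
          - (((n : ℝ) - (p : ℝ)) * (1 / (2 * z * (1 - z)) + (p : ℝ) - 1)) * fh z
        = h z - (((n : ℝ) - (p : ℝ)) * (1 - 2 * z) / (2 * z * (1 - z))) * f z)
    (g gh : ℝ → ℝ)
    (hg : ∀ z : ℝ, g z = deriv f z + (p : ℝ) * ((1 - 2 * z) * f z - fh z) / (2 * z * (1 - z)))
    (hgh : ∀ z : ℝ, gh z = deriv fh z
      + ((n : ℝ) - (p : ℝ)) * ((1 - 2 * z) * fh z - f z) / (2 * z * (1 - z))) :
    ∀ z ∈ Set.Ioo a b,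
      (z * (1 - z) * deriv g z + ((n : ℝ) - (p : ℝ)) * (1 / 2 - z) * g z
          + ((p : ℝ) / 2) * gh z = h z) ∧
      (z * (1 - z) * deriv gh z + (p : ℝ) * (1 / 2 - z) * gh z
          + (((n : ℝ) - (p : ℝ)) / 2) * g z = h z) := by
  intro z hz
  have hz0 : z ≠ 0 := by rintro rfl; exact h0 hz
  have hz1 : (1 : ℝ) - z ≠ 0 := sub_ne_zero.mpr (fun e => h1 (e ▸ hz))
  have hD : 2 * z * (1 - z) ≠ 0 := mul_ne_zero (mul_ne_zero two_ne_zero hz0) hz1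
  have Hf : HasDerivAt f (deriv f z) z := (hf z hz).hasDerivAt
  have Hf' : HasDerivAt (deriv f) (deriv (deriv f) z) z := (hf' z hz).hasDerivAt
  have Hfh : HasDerivAt fh (deriv fh z) z := (hfh z hz).hasDerivAt
  have Hfh' : HasDerivAt (deriv fh) (deriv (deriv fh) z) z := (hfh' z hz).hasDerivAt
  have hz1z : z * (1 - z) ≠ 0 := mul_ne_zero hz0 hz1
  have Hden : HasDerivAt (fun z : ℝ => 2 * z * (1 - z)) (2 - 4 * z) z := by
    have h' := ((hasDerivAt_id z).const_mul 2).mul ((hasDerivAt_id z).const_sub 1)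
    simp only [id_eq] at h'
    exact h'.congr_deriv (by ring)
  have HnumF : HasDerivAt (fun z : ℝ => (p : ℝ) * ((1 - 2 * z) * f z - fh z))
      ((p : ℝ) * (((-2) * f z + (1 - 2 * z) * deriv f z) - deriv fh z)) z := by
    have h1' : HasDerivAt (fun z : ℝ => (1 - 2 * z)) (-2) z := by
      have := ((hasDerivAt_id z).const_mul 2).const_sub 1
      exact this.congr_deriv (by ring)
    exact ((h1'.mul Hf).sub Hfh).const_mul _
  have HnumFh : HasDerivAt (fun z : ℝ => ((n : ℝ) - (p : ℝ)) * ((1 - 2 * z) * fh z - f z))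
      (((n : ℝ) - (p : ℝ)) * (((-2) * fh z + (1 - 2 * z) * deriv fh z) - deriv f z)) z := by
    have h1' : HasDerivAt (fun z : ℝ => (1 - 2 * z)) (-2) z := by
      have := ((hasDerivAt_id z).const_mul 2).const_sub 1
      exact this.congr_deriv (by ring)
    exact ((h1'.mul Hfh).sub Hf).const_mul _
  have Hg : HasDerivAt g
      (deriv (deriv f) z +
        ((p : ℝ) * (((-2) * f z + (1 - 2 * z) * deriv f z) - deriv fh z) * (2 * z * (1 - z))
          - (p : ℝ) * ((1 - 2 * z) * f z - fh z) * (2 - 4 * z)) / (2 * z * (1 - z)) ^ 2) z := by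
    rw [funext hg]
    exact Hf'.add (HnumF.div Hden hD)
  have Hgh : HasDerivAt gh
      (deriv (deriv fh) z +
        (((n : ℝ) - (p : ℝ)) * (((-2) * fh z + (1 - 2 * z) * deriv fh z) - deriv f z) * (2 * z * (1 - z))
          - ((n : ℝ) - (p : ℝ)) * ((1 - 2 * z) * fh z - f z) * (2 - 4 * z)) / (2 * z * (1 - z)) ^ 2) z := by
    rw [funext hgh]
    exact Hfh'.add (HnumFh.div Hden hD)
  have e1 := heq1 z hz
  have e2 := heq2 z hz
  have key1 : deriv (deriv f) z =
      (h z - (p : ℝ) * (1 - 2 * z) / (2 * z * (1 - z)) * fh z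
        + (p : ℝ) * (1 / (2 * z * (1 - z)) + (n : ℝ) - (p : ℝ) - 1) * f z
        - ((n : ℝ) / 2) * (1 - 2 * z) * deriv f z) / (z * (1 - z)) := by
    rw [eq_div_iff hz1z]; linear_combination e1
  have key2 : deriv (deriv fh) z =
      (h z - ((n : ℝ) - (p : ℝ)) * (1 - 2 * z) / (2 * z * (1 - z)) * f z
        + ((n : ℝ) - (p : ℝ)) * (1 / (2 * z * (1 - z)) + (p : ℝ) - 1) * fh z
        - ((n : ℝ) / 2) * (1 - 2 * z) * deriv fh z) / (z * (1 - z)) := by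
    rw [eq_div_iff hz1z]; linear_combination e2
  constructor
  · rw [Hg.deriv, hg z, hgh z, key1]
    field_simp
    ring
  · rw [Hgh.deriv, hg z, hgh z, key2]
    field_simp
    ring
end

section
/- Let n, p be integers with 1 ≤ p ≤ n−1, let I ⊆ ℝ be an open interval with 0 ∉ I and 1 ∉ I, let h : I → ℝ be differentiable, let g : I → ℝ be twice differentiable and ĝ : I → ℝ differentiable, and suppose that for all z ∈ I: z(1−z)g'(z) + (n−p)(1/2−z)·g(z) + (p/2)·ĝ(z) = h(z) and z(1−z)ĝ'(z) + p(1/2−z)·ĝ(z) + ((n−p)/2)·g(z) = h(z). Then for all z ∈ I: z(1−z)g''(z) + (n/2+1)(1−2z)g'(z) − (n−p)(p+1)·g(z) = h'(z) + p·h(z)/(z−1). -/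
/-- the first-order decoupled system arising from the radial part of the Hodge
Green's function in constant curvature leads to a hypergeometric-type second-order
equation for g. -/
theorem stmt_18 (n p : ℤ) (hp : 1 ≤ p) (hpn : p ≤ n - 1)
    (a b : ℝ) (h0 : (0 : ℝ) ∉ Set.Ioo a b) (h1 : (1 : ℝ) ∉ Set.Ioo a b)
    (h g gh : ℝ → ℝ)
    (hh : ∀ z ∈ Set.Ioo a b, DifferentiableAt ℝ h z)
    (hg : ∀ z ∈ Set.Ioo a b, DifferentiableAt ℝ g z)
    (hg' : ∀ z ∈ Set.Ioo a b, DifferentiableAt ℝ (deriv g) z)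
    (hgh : ∀ z ∈ Set.Ioo a b, DifferentiableAt ℝ gh z)
    (heq1 : ∀ z ∈ Set.Ioo a b,
      z * (1 - z) * deriv g z + ((n : ℝ) - (p : ℝ)) * (1 / 2 - z) * g z
        + ((p : ℝ) / 2) * gh z = h z)
    (heq2 : ∀ z ∈ Set.Ioo a b,
      z * (1 - z) * deriv gh z + (p : ℝ) * (1 / 2 - z) * gh z
        + (((n : ℝ) - (p : ℝ)) / 2) * g z = h z) :
    ∀ z ∈ Set.Ioo a b,
      z * (1 - z) * deriv (deriv g) z + ((n : ℝ) / 2 + 1) * (1 - 2 * z) * deriv g z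
          - ((n : ℝ) - (p : ℝ)) * ((p : ℝ) + 1) * g z
        = deriv h z + (p : ℝ) * h z / (z - 1) := by
  intro z hz
  have hz0 : z ≠ 0 := fun hzz => h0 (hzz ▸ hz)
  have hz1 : z ≠ 1 := fun hzz => h1 (hzz ▸ hz)
  have hz1' : z - 1 ≠ 0 := sub_ne_zero.mpr hz1
  have hz1'' : (1 : ℝ) - z ≠ 0 := sub_ne_zero.mpr (Ne.symm hz1)
  have hA : z * (1 - z) ≠ 0 := mul_ne_zero hz0 hz1''
  set c : ℝ := (n : ℝ) - (p : ℝ) with hc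
  -- derivative building blocks
  have Hq : HasDerivAt (fun x : ℝ => x * (1 - x)) (1 - 2 * z) z := by
    have := (hasDerivAt_id z).mul ((hasDerivAt_const z (1 : ℝ)).sub (hasDerivAt_id z))
    refine this.congr_deriv ?_; simp only [id_eq, Pi.sub_apply]; ring
  have Hl : HasDerivAt (fun x : ℝ => c * (1 / 2 - x)) (-c) z := by
    have := ((hasDerivAt_const z ((1 : ℝ) / 2)).sub (hasDerivAt_id z)).const_mul c
    refine this.congr_deriv ?_; ring
  have Hg2 : HasDerivAt (deriv g) (deriv (deriv g) z) z := (hg' z hz).hasDerivAt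
  have Hg1 : HasDerivAt g (deriv g z) z := (hg z hz).hasDerivAt
  have Hgh1 : HasDerivAt gh (deriv gh z) z := (hgh z hz).hasDerivAt
  have Hf : HasDerivAt
      (fun x : ℝ => x * (1 - x) * deriv g x + c * (1 / 2 - x) * g x + ((p : ℝ) / 2) * gh x)
      (((1 - 2 * z) * deriv g z + z * (1 - z) * deriv (deriv g) z)
        + ((-c) * g z + c * (1 / 2 - z) * deriv g z) + ((p : ℝ) / 2) * deriv gh z) z :=
    ((Hq.mul Hg2).add (Hl.mul Hg1)).add (Hgh1.const_mul ((p : ℝ) / 2))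
  have heqf : (fun x : ℝ => x * (1 - x) * deriv g x + c * (1 / 2 - x) * g x
      + ((p : ℝ) / 2) * gh x) =ᶠ[nhds z] h := by
    filter_upwards [isOpen_Ioo.mem_nhds hz] with x hx
    exact heq1 x hx
  have e3 : ((1 - 2 * z) * deriv g z + z * (1 - z) * deriv (deriv g) z)
      + ((-c) * g z + c * (1 / 2 - z) * deriv g z) + ((p : ℝ) / 2) * deriv gh z
      = deriv h z := by
    rw [← Hf.deriv]
    exact heqf.deriv_eq
  have e1 := heq1 z hz
  have e2 := heq2 z hz
  rw [hc] at *
  have key : z * (1 - z) *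
      (z * (1 - z) * deriv (deriv g) z + ((n : ℝ) / 2 + 1) * (1 - 2 * z) * deriv g z
        - ((n : ℝ) - (p : ℝ)) * ((p : ℝ) + 1) * g z)
      = z * (1 - z) * deriv h z - (p : ℝ) * z * h z := by
    linear_combination (z * (1 - z)) * e3 + ((p : ℝ) * (1 / 2 - z)) * e1
      - ((p : ℝ) / 2) * e2
  have hrhs : z * (1 - z) * (deriv h z + (p : ℝ) * h z / (z - 1))
      = z * (1 - z) * deriv h z - (p : ℝ) * z * h z := by
    field_simp
    ring
  exact mul_left_cancel₀ hA (key.trans hrhs.symm)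
end
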